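/- arXiv:1706.03298 — 13 statements merged into one kernel-verified Lean document; each statement's English description precedes it below -/
import Mathlib

section
/- If G is a (d₁,d₂)-biregular graph, then A² = (Q − d₁I)(Q − d₂I), where I is the identity matrix. -/
open Matrix

/-- If `G` is a `(d₁,d₂)`-biregular graph, then `A² = (Q − d₁I)(Q − d₂I)`. -/
theorem biregular_adj_sq_eq_signless
    {V : Type*} [Fintype V] [DecidableEq V]
    (G : SimpleGraph V) [DecidableRel G.Adj]
    (d₁ d₂ : ℕ) (V₁ : Finset V)
    (hbip : ∀ u v : V, G.Adj u v → (u ∈ V₁ ↔ v ∉ V₁))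
    (hdeg₁ : ∀ v ∈ V₁, G.degree v = d₁)
    (hdeg₂ : ∀ v ∉ V₁, G.degree v = d₂)
    (A D Q : Matrix V V ℝ)
    (hA : A = G.adjMatrix ℝ)
    (hD : D = Matrix.diagonal fun v => (G.degree v : ℝ))
    (hQ : Q = D + A) :
    A ^ 2 = (Q - (d₁ : ℝ) • 1) * (Q - (d₂ : ℝ) • 1) := by
  subst hA hD hQ
  set AA : Matrix V V ℝ := G.adjMatrix ℝ with hAA
  set f : V → ℝ := fun v => (G.degree v : ℝ) - d₁ with hf
  set g : V → ℝ := fun v => (G.degree v : ℝ) - d₂ with hg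
  have h1 : Matrix.diagonal (fun v => (G.degree v : ℝ)) + AA - (d₁ : ℝ) • 1
      = Matrix.diagonal f + AA := by
    ext i j
    by_cases h : i = j <;>
      simp [h, Matrix.diagonal_apply, Matrix.one_apply, hf, sub_eq_add_neg, add_comm,
        add_left_comm, add_assoc]
  have h2 : Matrix.diagonal (fun v => (G.degree v : ℝ)) + AA - (d₂ : ℝ) • 1
      = Matrix.diagonal g + AA := by
    ext i j
    by_cases h : i = j <;>
      simp [h, Matrix.diagonal_apply, Matrix.one_apply, hg, sub_eq_add_neg, add_comm,
        add_left_comm, add_assoc]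
  rw [h1, h2, add_mul, mul_add, mul_add]
  have hdiag : Matrix.diagonal f * Matrix.diagonal g = 0 := by
    rw [Matrix.diagonal_mul_diagonal]
    ext i j
    by_cases h : i = j
    · subst h
      by_cases hi : i ∈ V₁
      · simp [Matrix.diagonal_apply, hf, hdeg₁ i hi]
      · simp [Matrix.diagonal_apply, hg, hdeg₂ i hi]
    · simp [Matrix.diagonal_apply, h]
  have hcross : Matrix.diagonal f * AA + AA * Matrix.diagonal g = 0 := by
    ext i j
    simp only [Matrix.add_apply, Matrix.diagonal_mul, Matrix.mul_diagonal, Matrix.zero_apply]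
    by_cases hadj : G.Adj i j
    · by_cases hi : i ∈ V₁
      · have hj : j ∉ V₁ := (hbip i j hadj).mp hi
        simp [hf, hg, hdeg₁ i hi, hdeg₂ j hj]
      · have hj : j ∈ V₁ := by
          by_contra hj
          exact hi ((hbip i j hadj).mpr hj)
        have hAij : AA i j = 1 := by simp [hAA, hadj]
        rw [hAij]
        simp only [hf, hg, hdeg₂ i hi, hdeg₁ j hj]
        ring
    · have hAij : AA i j = 0 := by simp [hAA, hadj]
      simp [hAij]
  rw [hdiag, zero_add,
    show Matrix.diagonal f * AA + (AA * Matrix.diagonal g + AA * AA)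
        = (Matrix.diagonal f * AA + AA * Matrix.diagonal g) + AA * AA from by abel,
    hcross, zero_add, pow_two]
end

section
/- If G is a (d₁,d₂)-biregular graph, then A² = (L − d₁I)(L − d₂I), where I is the identity matrix. -/
open Matrix

/-- If `G` is a `(d₁,d₂)`-biregular graph, then `A² = (L − d₁I)(L − d₂I)`. -/
theorem biregular_adj_sq_eq_laplacian
    {V : Type*} [Fintype V] [DecidableEq V]
    (G : SimpleGraph V) [DecidableRel G.Adj]
    (d₁ d₂ : ℕ) (V₁ : Finset V)
    (hbip : ∀ u v : V, G.Adj u v → (u ∈ V₁ ↔ v ∉ V₁))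
    (hdeg₁ : ∀ v ∈ V₁, G.degree v = d₁)
    (hdeg₂ : ∀ v ∉ V₁, G.degree v = d₂)
    (A D L : Matrix V V ℝ)
    (hA : A = G.adjMatrix ℝ)
    (hD : D = Matrix.diagonal fun v => (G.degree v : ℝ))
    (hL : L = D - A) :
    A ^ 2 = (L - (d₁ : ℝ) • 1) * (L - (d₂ : ℝ) • 1) := by
  have hsmul : ∀ c : ℝ, c • (1 : Matrix V V ℝ) = Matrix.diagonal fun _ => c := by
    intro c
    ext i j
    simp [Matrix.diagonal, Matrix.one_apply]
  have hP : D - (d₁ : ℝ) • 1 = Matrix.diagonal fun v => (G.degree v : ℝ) - d₁ := by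
    rw [hD, hsmul, Matrix.diagonal_sub]
  have hQ : D - (d₂ : ℝ) • 1 = Matrix.diagonal fun v => (G.degree v : ℝ) - d₂ := by
    rw [hD, hsmul, Matrix.diagonal_sub]
  have h1 : (D - (d₁ : ℝ) • 1) * (D - (d₂ : ℝ) • 1) = 0 := by
    rw [hP, hQ, Matrix.diagonal_mul_diagonal]
    ext i j
    by_cases hi : i ∈ V₁
    · simp [Matrix.diagonal, hdeg₁ i hi]
    · simp [Matrix.diagonal, hdeg₂ i hi]
  have h2 : (D - (d₁ : ℝ) • 1) * A + A * (D - (d₂ : ℝ) • 1) = 0 := by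
    rw [hP, hQ, hA]
    ext i j
    simp only [Matrix.add_apply, Matrix.diagonal_mul, Matrix.mul_diagonal,
      Matrix.zero_apply]
    by_cases hadj : G.Adj i j
    · by_cases hi : i ∈ V₁
      · have hj : j ∉ V₁ := (hbip i j hadj).mp hi
        simp [hdeg₁ i hi, hdeg₂ j hj]
      · have hj : j ∈ V₁ := by
          by_contra hj
          exact hi (((hbip i j hadj)).mpr hj)
        simp [hadj, hdeg₂ i hi, hdeg₁ j hj]
    · simp [hadj]
  have hL1 : L - (d₁ : ℝ) • 1 = (D - (d₁ : ℝ) • 1) - A := by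
    rw [hL]; abel
  have hL2 : L - (d₂ : ℝ) • 1 = (D - (d₂ : ℝ) • 1) - A := by
    rw [hL]; abel
  rw [hL1, hL2, sub_mul, mul_sub (D - (d₁ : ℝ) • 1) (D - (d₂ : ℝ) • 1) A,
    mul_sub A (D - (d₂ : ℝ) • 1) A, h1,
    eq_neg_of_add_eq_zero_left h2, pow_two]
  abel
end

section
/- Let G be a (d₁,d₂)-biregular graph on n vertices. If q₁, …, qₙ are the eigenvalues of Q listed with multiplicity, then (q₁−d₁)(q₁−d₂), …, (qₙ−d₁)(qₙ−d₂) are the eigenvalues of A² listed with multiplicity. Moreover, if λ is an eigenvalue of A² and q₁, q₂ are the two solutions of the equation λ = (x−d₁)(x−d₂), then Eig(Q,q₁) ⊕ Eig(Q,q₂) = Eig(A²,λ). -/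
open Matrix Module

section AuxLemmas
open Matrix Polynomial

section aux
variable {V : Type*} [Fintype V] [DecidableEq V]

lemma charpoly_conj' {n R : Type*} [Fintype n] [DecidableEq n] [CommRing R]
    (P P' M : Matrix n n R) (h : P * P' = 1) :
    (P * M * P').charpoly = M.charpoly := by
  have hd : (P.map (C : R →+* R[X])).det * (P'.map (C : R →+* R[X])).det = 1 := by
    rw [← det_mul, ← Matrix.map_mul, h, Matrix.map_one _ (map_zero _) (map_one _), det_one]
  have hcm : charmatrix (P * M * P') =
      P.map (C : R →+* R[X]) * charmatrix M * P'.map (C : R →+* R[X]) := by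
    unfold charmatrix
    rw [mul_sub, sub_mul]
    congr 1
    · have hc := (Matrix.scalar_commute (n := n) (X : R[X]) (fun r' => Commute.all X r')
        (P'.map (C : R →+* R[X]))).eq
      rw [mul_assoc, hc, ← mul_assoc, ← Matrix.map_mul, h,
        Matrix.map_one _ (map_zero _) (map_one _), one_mul]
    · simp [RingHom.mapMatrix_apply, Matrix.map_mul]
  rw [Matrix.charpoly, hcm, det_mul, det_mul]
  calc (P.map (C : R →+* R[X])).det * M.charmatrix.det * (P'.map (C : R →+* R[X])).det
      = M.charmatrix.det * ((P.map (C : R →+* R[X])).det * (P'.map (C : R →+* R[X])).det) := by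
        ring
    _ = M.charpoly := by rw [hd, mul_one]; rfl

lemma charpoly_diag {n R : Type*} [Fintype n] [DecidableEq n] [CommRing R] (f : n → R) :
    (Matrix.diagonal f).charpoly = ∏ v, (X - C (f v)) := by
  have : charmatrix (Matrix.diagonal f) = Matrix.diagonal (fun v => X - C (f v)) := by
    unfold charmatrix
    rw [RingHom.mapMatrix_apply, scalar_apply, Matrix.diagonal_map (map_zero _), ← diagonal_sub]
  rw [Matrix.charpoly, this, det_diagonal]

lemma exists_perm_of_map_eq {α β : Type*} [Fintype α] [DecidableEq α] [DecidableEq β]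
    (f g : α → β) (h : Multiset.map f Finset.univ.val = Multiset.map g Finset.univ.val) :
    ∃ σ : Equiv.Perm α, ∀ v, f (σ v) = g v := by
  have hcard : ∀ b : β, Fintype.card {a // g a = b} = Fintype.card {a // f a = b} := by
    intro b
    have := congrArg (Multiset.count b) h
    rw [Multiset.count_map, Multiset.count_map] at this
    simp only [Fintype.card_subtype]
    simp only [Finset.card, Finset.filter_val]
    convert this.symm using 2 <;> · ext a; simp [eq_comm]
  have e : ∀ b : β, {a // g a = b} ≃ {a // f a = b} := fun b =>
    Fintype.equivOfCardEq (hcard b)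
  refine ⟨(Equiv.sigmaFiberEquiv g).symm.trans
    ((Equiv.sigmaCongrRight e).trans (Equiv.sigmaFiberEquiv f)), fun v => ?_⟩
  simp only [Equiv.trans_apply, Equiv.sigmaFiberEquiv, Equiv.coe_fn_symm_mk,
    Equiv.sigmaCongrRight_apply, Equiv.coe_fn_mk, Sigma.map]
  exact (e (g v) ⟨v, rfl⟩).2

lemma quad_expand (Q : Matrix V V ℝ) (a b : ℝ) :
    (Q - a • 1) * (Q - b • 1) = Q * Q - (a + b) • Q + (a * b) • (1 : Matrix V V ℝ) := by
  simp only [sub_mul, mul_sub, Matrix.smul_mul, Matrix.mul_smul, smul_smul, one_mul,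
    Matrix.mul_one, add_smul, mul_comm b a]
  abel

lemma charpoly_eq_prod_of_herm {M : Matrix V V ℝ} (hM : M.IsHermitian) :
    M.charpoly = ∏ v, (X - C (hM.eigenvalues v)) := by
  have hU : (hM.eigenvectorUnitary : Matrix V V ℝ) * star (hM.eigenvectorUnitary : Matrix V V ℝ)
      = 1 := (Matrix.mem_unitaryGroup_iff).mp hM.eigenvectorUnitary.2
  have hspec := hM.spectral_theorem
  have : diagonal (RCLike.ofReal ∘ hM.eigenvalues) = diagonal hM.eigenvalues := by
    congr 1
  rw [this] at hspec
  conv_lhs => rw [hspec]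
  rw [Unitary.conjStarAlgAut_apply, charpoly_conj' _ _ _ hU, charpoly_diag]
end aux

section key
variable {V : Type*} [Fintype V] [DecidableEq V]
  (G : SimpleGraph V) [DecidableRel G.Adj]
  (d₁ d₂ : ℕ) (V₁ : Finset V)

lemma key_identity
    (hbip : ∀ u v : V, G.Adj u v → (u ∈ V₁ ↔ v ∉ V₁))
    (hdeg₁ : ∀ v ∈ V₁, G.degree v = d₁)
    (hdeg₂ : ∀ v ∉ V₁, G.degree v = d₂)
    (A D Q : Matrix V V ℝ)
    (hA : A = G.adjMatrix ℝ)
    (hD : D = Matrix.diagonal fun v => (G.degree v : ℝ))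
    (hQ : Q = D + A) :
    (Q - (d₁ : ℝ) • 1) * (Q - (d₂ : ℝ) • 1) = A ^ 2 := by
  set P₁ : Matrix V V ℝ := Matrix.diagonal (fun v => if v ∈ V₁ then 1 else 0) with hP₁
  set P₂ : Matrix V V ℝ := Matrix.diagonal (fun v => if v ∈ V₁ then 0 else 1) with hP₂
  have hPsum : P₁ + P₂ = 1 := by
    ext u v
    by_cases huv : u = v
    · subst huv; by_cases hv : u ∈ V₁ <;>
        simp [hP₁, hP₂, diagonal_apply, Matrix.one_apply, hv]
    · simp [hP₁, hP₂, diagonal_apply, Matrix.one_apply, huv]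
  have hDsplit : D = (d₁ : ℝ) • P₁ + (d₂ : ℝ) • P₂ := by
    ext u v
    by_cases huv : u = v
    · subst huv
      by_cases hv : u ∈ V₁
      · simp [hD, hP₁, hP₂, diagonal_apply, hv, hdeg₁ u hv]
      · simp [hD, hP₁, hP₂, diagonal_apply, hv, hdeg₂ u hv]
    · simp [hD, hP₁, hP₂, diagonal_apply, huv]
  have hAP : A * P₁ = P₂ * A := by
    ext u v
    rw [hP₁, hP₂, mul_diagonal, diagonal_mul, hA]
    by_cases hadj : G.Adj u v
    · have hb := hbip u v hadj
      by_cases hu : u ∈ V₁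
      · simp [hadj, hu, hb.mp hu]
      · have hv : v ∈ V₁ := by
          by_contra hv; exact hu (hb.mpr hv)
        simp [hadj, hu, hv]
    · simp [hadj]
  have h21 : P₂ * P₁ = 0 := by
    ext u v
    by_cases huv : u = v
    · subst huv; by_cases hv : u ∈ V₁ <;>
        simp [hP₁, hP₂, diagonal_mul_diagonal, diagonal_apply, hv]
    · simp [hP₁, hP₂, diagonal_mul_diagonal, diagonal_apply, huv]
  have h1 : Q - (d₁ : ℝ) • 1 = A + ((d₂ : ℝ) - d₁) • P₂ := by
    rw [hQ, hDsplit, ← hPsum]; module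
  have h2 : Q - (d₂ : ℝ) • 1 = A + ((d₁ : ℝ) - d₂) • P₁ := by
    rw [hQ, hDsplit, ← hPsum]; module
  rw [h1, h2, sq]
  simp only [add_mul, mul_add, Matrix.smul_mul, Matrix.mul_smul, smul_smul, hAP, h21, smul_zero]
  module
end key


section diag2
variable {V : Type*} [Fintype V] [DecidableEq V]

lemma herm_shift_prod_charpoly {Q M : Matrix V V ℝ} (hQherm : Q.IsHermitian) (c₁ c₂ : ℝ)
    (hkey : (Q - c₁ • 1) * (Q - c₂ • 1) = M) :
    M.charpoly = ∏ v, (X - C ((hQherm.eigenvalues v - c₁) * (hQherm.eigenvalues v - c₂))) := by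
  set U : Matrix V V ℝ := (hQherm.eigenvectorUnitary : Matrix V V ℝ) with hUdef
  have hU : U * star U = 1 := (Matrix.mem_unitaryGroup_iff).mp hQherm.eigenvectorUnitary.2
  have hU' : star U * U = 1 := (Matrix.mem_unitaryGroup_iff').mp hQherm.eigenvectorUnitary.2
  set q : V → ℝ := hQherm.eigenvalues with hqdef
  have hspec : Q = U * diagonal q * star U := by
    have := hQherm.spectral_theorem
    have h2 : diagonal (RCLike.ofReal ∘ q) = diagonal q := by congr 1
    rw [h2] at this; exact this
  have hds : ∀ c : ℝ, diagonal q - c • (1 : Matrix V V ℝ) = diagonal (fun v => q v - c) := by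
    intro c
    ext u v
    by_cases huv : u = v
    · subst huv; simp [diagonal_apply, Matrix.one_apply]
    · simp [diagonal_apply, Matrix.one_apply, huv]
  have hshift : ∀ c : ℝ, Q - c • 1 = U * diagonal (fun v => q v - c) * star U := by
    intro c
    rw [← hds, mul_sub, sub_mul, hspec]
    congr 1
    rw [Matrix.mul_smul, Matrix.mul_one, Matrix.smul_mul, hU]
  have hM : M = U * diagonal (fun v => (q v - c₁) * (q v - c₂)) * star U := by
    rw [← hkey, hshift c₁, hshift c₂, ← diagonal_mul_diagonal]
    calc U * diagonal (fun v => q v - c₁) * star U * (U * diagonal (fun v => q v - c₂) * star U)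
        = U * diagonal (fun v => q v - c₁) * (star U * U) * diagonal (fun v => q v - c₂) *
          star U := by
          simp only [Matrix.mul_assoc]
      _ = U * (diagonal (fun v => q v - c₁) * diagonal (fun v => q v - c₂)) * star U := by
          rw [hU']; simp only [Matrix.mul_assoc, Matrix.one_mul]
  rw [hM, charpoly_conj' _ _ _ hU, charpoly_diag]

omit [DecidableEq V] in
lemma roots_prod_fun (f : V → ℝ) :
    (∏ v, (X - C (f v))).roots = Multiset.map f Finset.univ.val := by
  have h : ∏ v, (X - C (f v)) = ((Finset.univ.val.map f).map (fun a => X - C a)).prod := by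
    rw [Multiset.map_map]; rfl
  rw [h, roots_multiset_prod_X_sub_C]
end diag2
end AuxLemmas

/-- For a `(d₁,d₂)`-biregular graph: if `q₁, …, qₙ` are the eigenvalues of `Q`
listed with multiplicity, then `(qᵢ − d₁)(qᵢ − d₂)` are the eigenvalues of `A²`
listed with multiplicity; moreover, if `λ` is an eigenvalue of `A²` and `q₁, q₂`
are the two solutions of `λ = (x − d₁)(x − d₂)`, then
`Eig(Q,q₁) ⊕ Eig(Q,q₂) = Eig(A²,λ)`. -/
theorem biregular_signless_eigenvalues_to_adj
    {V : Type*} [Fintype V] [DecidableEq V]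
    (G : SimpleGraph V) [DecidableRel G.Adj]
    (d₁ d₂ : ℕ) (V₁ : Finset V)
    (hbip : ∀ u v : V, G.Adj u v → (u ∈ V₁ ↔ v ∉ V₁))
    (hdeg₁ : ∀ v ∈ V₁, G.degree v = d₁)
    (hdeg₂ : ∀ v ∉ V₁, G.degree v = d₂)
    (A D Q : Matrix V V ℝ)
    (hA : A = G.adjMatrix ℝ)
    (hD : D = Matrix.diagonal fun v => (G.degree v : ℝ))
    (hQ : Q = D + A)
    (hQherm : Q.IsHermitian) (hA2herm : (A ^ 2).IsHermitian) :
    (∃ σ : Equiv.Perm V, ∀ v : V,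
        hA2herm.eigenvalues (σ v) =
          (hQherm.eigenvalues v - (d₁ : ℝ)) * (hQherm.eigenvalues v - (d₂ : ℝ))) ∧
    (∀ lam q₁ q₂ : ℝ,
        Module.End.HasEigenvalue (Matrix.mulVecLin (A ^ 2)) lam →
        (∀ x : ℝ, (x - (d₁ : ℝ)) * (x - (d₂ : ℝ)) = lam ↔ x = q₁ ∨ x = q₂) →
        Module.End.eigenspace (Matrix.mulVecLin Q) q₁ ⊔
            Module.End.eigenspace (Matrix.mulVecLin Q) q₂ =
          Module.End.eigenspace (Matrix.mulVecLin (A ^ 2)) lam) := by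
  have key := key_identity G d₁ d₂ V₁ hbip hdeg₁ hdeg₂ A D Q hA hD hQ
  constructor
  · -- part 1
    have h1 := herm_shift_prod_charpoly hQherm (d₁ : ℝ) (d₂ : ℝ) key
    have h2 := charpoly_eq_prod_of_herm hA2herm
    have hroots := congrArg Polynomial.roots (h2.symm.trans h1)
    rw [roots_prod_fun, roots_prod_fun] at hroots
    exact exists_perm_of_map_eq _ _ hroots
  · -- part 2
    intro lam q₁ q₂ _ hiff
    have h1 : (q₁ - d₁) * (q₁ - d₂) = lam := (hiff q₁).mpr (Or.inl rfl)
    have h2 : (q₂ - d₁) * (q₂ - d₂) = lam := (hiff q₂).mpr (Or.inr rfl)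
    have hs : ((d₁ + d₂ - q₁ : ℝ) - d₁) * ((d₁ + d₂ - q₁ : ℝ) - d₂) = lam := by nlinarith [h1]
    have hsum : q₁ + q₂ = (d₁ : ℝ) + d₂ := by
      rcases (hiff _).mp hs with h | h
      · nlinarith [h1, h2, h]
      · linarith
    have hprod : q₁ * q₂ = (d₁ : ℝ) * d₂ - lam := by nlinarith [h1, hsum]
    -- matrix identity
    have hmat : (Q - q₁ • 1) * (Q - q₂ • 1) = A ^ 2 - lam • 1 := by
      rw [quad_expand, ← key, quad_expand, hsum, hprod, sub_smul]
      abel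
    have hmat' : (Q - q₂ • 1) * (Q - q₁ • 1) = A ^ 2 - lam • 1 := by
      rw [quad_expand, ← hmat, quad_expand, add_comm q₂ q₁, mul_comm q₂ q₁]
    -- basic mulVec facts
    have hBv : ∀ (c : ℝ) (v : V → ℝ), (Q - c • 1) *ᵥ v = Q *ᵥ v - c • v := by
      intro c v
      rw [sub_mulVec, smul_mulVec, one_mulVec]
    have hmem : ∀ (M : Matrix V V ℝ) (c : ℝ) (v : V → ℝ),
        v ∈ Module.End.eigenspace (Matrix.mulVecLin M) c ↔ M *ᵥ v = c • v := by
      intro M c v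
      rw [Module.End.mem_eigenspace_iff, Matrix.mulVecLin_apply]
    apply le_antisymm
    · -- sup ≤ eigenspace A²
      apply sup_le
      · intro v hv
        rw [hmem] at hv ⊢
        have h0 : (Q - q₁ • 1) *ᵥ v = 0 := by rw [hBv, hv, sub_self]
        have : (A ^ 2 - lam • 1) *ᵥ v = 0 := by
          rw [← hmat', ← mulVec_mulVec, h0, mulVec_zero]
        rw [sub_mulVec, smul_mulVec, one_mulVec, sub_eq_zero] at this
        exact this
      · intro v hv
        rw [hmem] at hv ⊢
        have h0 : (Q - q₂ • 1) *ᵥ v = 0 := by rw [hBv, hv, sub_self]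
        have : (A ^ 2 - lam • 1) *ᵥ v = 0 := by
          rw [← hmat, ← mulVec_mulVec, h0, mulVec_zero]
        rw [sub_mulVec, smul_mulVec, one_mulVec, sub_eq_zero] at this
        exact this
    · -- eigenspace A² ≤ sup
      intro v hv
      rw [hmem] at hv
      have hz : (A ^ 2 - lam • 1) *ᵥ v = 0 := by
        rw [sub_mulVec, smul_mulVec, one_mulVec, hv, sub_self]
      have hz12 : (Q - q₁ • 1) *ᵥ ((Q - q₂ • 1) *ᵥ v) = 0 := by
        rw [mulVec_mulVec, hmat, hz]
      have hz21 : (Q - q₂ • 1) *ᵥ ((Q - q₁ • 1) *ᵥ v) = 0 := by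
        rw [mulVec_mulVec, hmat', hz]
      by_cases hq : q₁ = q₂
      · -- equal roots: v is already a q₁-eigenvector
        subst hq
        have hQt : Qᵀ = Q := by
          rw [← conjTranspose_eq_transpose_of_trivial]; exact hQherm
        have hsym : (Q - q₁ • 1)ᵀ = Q - q₁ • 1 := by
          rw [transpose_sub, transpose_smul, transpose_one, hQt]
        set w : V → ℝ := (Q - q₁ • 1) *ᵥ v with hw
        have hww : w ⬝ᵥ w = 0 := by
          calc w ⬝ᵥ w = w ⬝ᵥ ((Q - q₁ • 1) *ᵥ v) := rfl
            _ = (w ᵥ* (Q - q₁ • 1)) ⬝ᵥ v := by rw [dotProduct_mulVec]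
            _ = ((Q - q₁ • 1)ᵀ *ᵥ w) ⬝ᵥ v := by rw [mulVec_transpose]
            _ = ((Q - q₁ • 1) *ᵥ w) ⬝ᵥ v := by rw [hsym]
            _ = 0 := by rw [hz12, zero_dotProduct]
        have hw0 : w = 0 := dotProduct_self_eq_zero.mp hww
        have : v ∈ Module.End.eigenspace (Matrix.mulVecLin Q) q₁ := by
          rw [hmem]
          have := hw0
          rw [hw, hBv, sub_eq_zero] at this
          exact this
        exact le_sup_left (α := Submodule ℝ (V → ℝ)) this
      · -- distinct roots
        set w₁ : V → ℝ := (Q - q₁ • 1) *ᵥ v with hw₁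
        set w₂ : V → ℝ := (Q - q₂ • 1) *ᵥ v with hw₂
        have hm₂ : w₂ ∈ Module.End.eigenspace (Matrix.mulVecLin Q) q₁ := by
          rw [hmem]
          have := hz12
          rw [hBv, sub_eq_zero] at this
          exact this
        have hm₁ : w₁ ∈ Module.End.eigenspace (Matrix.mulVecLin Q) q₂ := by
          rw [hmem]
          have := hz21
          rw [hBv, sub_eq_zero] at this
          exact this
        have hvrep : v = (q₁ - q₂)⁻¹ • (w₂ - w₁) := by
          have hdiff : w₂ - w₁ = (q₁ - q₂) • v := by
            rw [hw₁, hw₂, hBv, hBv, sub_smul]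
            abel
          rw [hdiff, smul_smul, inv_mul_cancel₀ (sub_ne_zero.mpr hq), one_smul]
        rw [hvrep]
        exact Submodule.smul_mem _ _ (Submodule.sub_mem _
          (le_sup_left (α := Submodule ℝ (V → ℝ)) hm₂)
          (le_sup_right (α := Submodule ℝ (V → ℝ)) hm₁))
end

section
/- Let G be a (d₁,d₂)-biregular graph with d₁ ≠ d₂, and let v be an eigenvector of A with eigenvalue λ ≠ 0. Then v is not an eigenvector of Q. -/
open Matrix

/-- Let `G` be `(d₁,d₂)`-biregular with `d₁ ≠ d₂`, and let `v` be an eigenvector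
of `A` with eigenvalue `λ ≠ 0`.  Then `v` is not an eigenvector of `Q`. -/
theorem biregular_adj_eigenvector_not_signless_eigenvector
    {V : Type*} [Fintype V] [DecidableEq V]
    (G : SimpleGraph V) [DecidableRel G.Adj]
    (d₁ d₂ : ℕ) (hne : d₁ ≠ d₂) (V₁ : Finset V)
    (hbip : ∀ u w : V, G.Adj u w → (u ∈ V₁ ↔ w ∉ V₁))
    (hdeg₁ : ∀ w ∈ V₁, G.degree w = d₁)
    (hdeg₂ : ∀ w ∉ V₁, G.degree w = d₂)
    (A D Q : Matrix V V ℝ)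
    (hA : A = G.adjMatrix ℝ)
    (hD : D = Matrix.diagonal fun w => (G.degree w : ℝ))
    (hQ : Q = D + A)
    (v : V → ℝ) (hv : v ≠ 0) (lam : ℝ) (hlam : lam ≠ 0)
    (heig : A.mulVec v = lam • v) :
    ¬ ∃ μ : ℝ, Q.mulVec v = μ • v := by
  rintro ⟨μ, hμ⟩
  -- D v = (μ - lam) • v
  have hDv : ∀ w, (G.degree w : ℝ) * v w = (μ - lam) * v w := by
    intro w
    have h := congrFun hμ w
    rw [hQ, Matrix.add_mulVec, heig] at h
    have h2 : D.mulVec v w = (μ - lam) * v w := by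
      have := h
      simp [Pi.add_apply, Pi.smul_apply, smul_eq_mul] at this
      linarith
    rw [hD, Matrix.mulVec_diagonal] at h2
    exact h2
  have hdeg : ∀ w, v w ≠ 0 → (G.degree w : ℝ) = μ - lam := by
    intro w hw
    exact mul_right_cancel₀ hw (hDv w)
  obtain ⟨w₀, hw₀⟩ := Function.ne_iff.mp hv
  have hAw : A.mulVec v w₀ = lam * v w₀ := by rw [heig]; simp
  have hsum : ∑ u ∈ G.neighborFinset w₀, v u = lam * v w₀ := by
    rw [← hAw, hA, SimpleGraph.adjMatrix_mulVec_apply]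
  have hne0 : ∑ u ∈ G.neighborFinset w₀, v u ≠ 0 := by
    rw [hsum]; exact mul_ne_zero hlam hw₀
  obtain ⟨u, hu, hvu⟩ := Finset.exists_ne_zero_of_sum_ne_zero hne0
  rw [SimpleGraph.mem_neighborFinset] at hu
  have hadj : G.Adj w₀ u := hu
  have h1 := hdeg w₀ hw₀
  have h2 := hdeg u hvu
  by_cases hmem : w₀ ∈ V₁
  · have hu2 : u ∉ V₁ := (hbip w₀ u hadj).mp hmem
    rw [hdeg₁ w₀ hmem] at h1
    rw [hdeg₂ u hu2] at h2
    exact hne (Nat.cast_injective (h1.trans h2.symm))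
  · have hu2 : u ∈ V₁ := by
      by_contra hc
      exact hmem ((hbip w₀ u hadj).mpr hc)
    rw [hdeg₂ w₀ hmem] at h1
    rw [hdeg₁ u hu2] at h2
    exact hne (Nat.cast_injective (h2.trans h1.symm))
end

section
/- Let G be a (d₁,d₂)-biregular graph, let μ ≠ 0 be an eigenvalue of A² with dim Eig(A²,μ) = m, and let q₁ ≠ q₂ be the two real roots of the equation μ = (x−d₁)(x−d₂). Then dim Eig(Q,q₁) = dim Eig(Q,q₂) = m/2 (in particular m is even). -/
open Matrix Module

/-- For `G` a `(d₁,d₂)`-biregular graph, let `μ ≠ 0` be an eigenvalue of `A²`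
with `dim Eig(A²,μ) = m` and let `q₁ ≠ q₂` be the two real roots of
`μ = (x−d₁)(x−d₂)`.  Then `m` is even and
`dim Eig(Q,q₁) = dim Eig(Q,q₂) = m/2`. -/
theorem biregular_signless_eigenspace_split
    {V : Type*} [Fintype V] [DecidableEq V]
    (G : SimpleGraph V) [DecidableRel G.Adj]
    (d₁ d₂ : ℕ) (V₁ : Finset V)
    (hbip : ∀ u w : V, G.Adj u w → (u ∈ V₁ ↔ w ∉ V₁))
    (hdeg₁ : ∀ w ∈ V₁, G.degree w = d₁)
    (hdeg₂ : ∀ w ∉ V₁, G.degree w = d₂)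
    (A D Q : Matrix V V ℝ)
    (hA : A = G.adjMatrix ℝ)
    (hD : D = Matrix.diagonal fun w => (G.degree w : ℝ))
    (hQ : Q = D + A)
    (μ : ℝ) (hμ : μ ≠ 0)
    (hμeig : Module.End.HasEigenvalue (Matrix.mulVecLin (A ^ 2)) μ)
    (m : ℕ)
    (hm : m = Module.finrank ℝ
      (Module.End.eigenspace (Matrix.mulVecLin (A ^ 2)) μ))
    (q₁ q₂ : ℝ) (hq : q₁ ≠ q₂)
    (hq₁ : (q₁ - (d₁ : ℝ)) * (q₁ - (d₂ : ℝ)) = μ)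
    (hq₂ : (q₂ - (d₁ : ℝ)) * (q₂ - (d₂ : ℝ)) = μ) :
    Even m ∧
    Module.finrank ℝ (Module.End.eigenspace (Matrix.mulVecLin Q) q₁) = m / 2 ∧
    Module.finrank ℝ (Module.End.eigenspace (Matrix.mulVecLin Q) q₂) = m / 2 := by
  classical
  -- scalar relations between the roots
  have hqne : q₁ - q₂ ≠ 0 := sub_ne_zero.mpr hq
  have hsum : q₁ + q₂ = (d₁ : ℝ) + d₂ := by
    have h2 : (q₁ - q₂) * (q₁ + q₂ - ((d₁ : ℝ) + d₂)) = 0 := by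
      linear_combination hq₁ - hq₂
    rcases mul_eq_zero.mp h2 with h3 | h3
    · exact absurd h3 hqne
    · linarith
  have hprod : q₁ * q₂ = (d₁ : ℝ) * d₂ - μ := by
    linear_combination q₁ * hsum - hq₁
  -- the sign matrix
  set S : Matrix V V ℝ := Matrix.diagonal (fun w => if w ∈ V₁ then (1 : ℝ) else -1) with hS
  have hD' : D = Matrix.diagonal (fun w => if w ∈ V₁ then (d₁ : ℝ) else (d₂ : ℝ)) := by
    rw [hD]
    have hfun : (fun w => ((G.degree w : ℝ))) = fun w => if w ∈ V₁ then (d₁ : ℝ) else d₂ := by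
      funext w
      by_cases hw : w ∈ V₁
      · simp [hw, hdeg₁ w hw]
      · simp [hw, hdeg₂ w hw]
    rw [hfun]
  have hSS : S * S = 1 := by
    rw [hS, Matrix.diagonal_mul_diagonal]
    have hfun : (fun w => (if w ∈ V₁ then (1 : ℝ) else -1) * (if w ∈ V₁ then (1 : ℝ) else -1))
        = fun _ => (1 : ℝ) := by
      funext w; by_cases hw : w ∈ V₁ <;> simp [hw]
    rw [hfun, Matrix.diagonal_one]
  have hAS : A * S = -(S * A) := by
    rw [hA, hS]; ext i j
    rw [Matrix.mul_diagonal, Matrix.neg_apply, Matrix.diagonal_mul]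
    by_cases hadj : G.Adj i j
    · have hij := hbip i j hadj
      by_cases hi : i ∈ V₁
      · have hj : j ∉ V₁ := hij.mp hi
        simp [hadj, hi, hj] <;> ring
      · have hj : j ∈ V₁ := by by_contra hj; exact hi (hij.mpr hj)
        simp [hadj, hi, hj] <;> ring
    · simp [hadj]
  have hDS : D * S = S * D := by
    rw [hD', hS, Matrix.diagonal_mul_diagonal, Matrix.diagonal_mul_diagonal]
    have hfun : (fun w => (if w ∈ V₁ then (d₁ : ℝ) else d₂) * (if w ∈ V₁ then (1 : ℝ) else -1))
        = fun w => (if w ∈ V₁ then (1 : ℝ) else -1) * (if w ∈ V₁ then (d₁ : ℝ) else d₂) := by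
      funext w; ring
    rw [hfun]
  have hL1 : D * D = ((d₁ : ℝ) + d₂) • D - ((d₁ : ℝ) * d₂) • 1 := by
    rw [hD']; ext i j
    by_cases hij : i = j
    · subst hij
      by_cases hi : i ∈ V₁ <;>
        simp [Matrix.diagonal_mul_diagonal, Matrix.diagonal_apply_eq,
          Matrix.one_apply, hi] <;> ring
    · simp [Matrix.diagonal_mul_diagonal, Matrix.diagonal_apply_ne _ hij,
        Matrix.one_apply, hij]
  have hL2 : D * A + A * D = ((d₁ : ℝ) + d₂) • A := by
    rw [hD', hA]; ext i j
    rw [Matrix.add_apply, Matrix.smul_apply, Matrix.diagonal_mul, Matrix.mul_diagonal,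
      smul_eq_mul]
    by_cases hadj : G.Adj i j
    · have hij := hbip i j hadj
      by_cases hi : i ∈ V₁
      · have hj : j ∉ V₁ := hij.mp hi
        simp [hadj, hi, hj] <;> ring
      · have hj : j ∈ V₁ := by by_contra hj; exact hi (hij.mpr hj)
        simp [hadj, hi, hj] <;> ring
    · simp [hadj]
  -- key identity 1 : (Q - x)(Q - y) = A² - μ
  have key4 : ∀ x y : ℝ, x + y = (d₁ : ℝ) + d₂ → x * y = (d₁ : ℝ) * d₂ - μ →
      (Q - x • 1) * (Q - y • 1) = A ^ 2 - μ • (1 : Matrix V V ℝ) := by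
    intro x y hxy hxy2
    have e0 : (Q - x • 1) * (Q - y • 1) = Q * Q - (x + y) • Q + (x * y) • (1 : Matrix V V ℝ) := by
      simp only [sub_mul, mul_sub, smul_mul_assoc, mul_smul_comm, one_mul, mul_one,
        smul_sub, smul_smul]
      module
    rw [e0, hxy, hxy2, hQ, pow_two]
    have e1 : (D + A) * (D + A) = D * D + (D * A + A * D) + A * A := by noncomm_ring
    rw [e1, hL1, hL2]
    module
  -- key identity 2 : (SA)(Q - x) = -(Q - y)(SA)
  have key5 : ∀ x y : ℝ, x + y = (d₁ : ℝ) + d₂ →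
      (S * A) * (Q - x • 1) = -((Q - y • 1) * (S * A)) := by
    intro x y hxy
    rw [hQ]
    have e1 : (S * A) * (D + A - x • 1) = S * (A * D) + S * (A * A) - x • (S * A) := by
      simp only [mul_add, mul_sub, mul_smul_comm, mul_one, mul_assoc]
    have e2 : (D + A - y • 1) * (S * A) = D * (S * A) + A * (S * A) - y • (S * A) := by
      simp only [add_mul, sub_mul, smul_mul_assoc, one_mul]
    rw [e1, e2]
    have e3 : A * (S * A) = -(S * (A * A)) := by
      rw [← mul_assoc, hAS]; simp [mul_assoc]
    have e4 : D * (S * A) = S * (D * A) := by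
      rw [← mul_assoc, hDS, mul_assoc]
    have e5 : S * (A * D) = ((d₁ : ℝ) + d₂) • (S * A) - S * (D * A) := by
      rw [eq_sub_iff_add_eq, ← mul_add, add_comm (A * D), hL2, mul_smul_comm]
    rw [e3, e4, e5, ← hxy]
    module
  have hSASA : (S * A) * (S * A) = -(A * A) := by
    calc (S * A) * (S * A) = S * ((A * S) * A) := by noncomm_ring
    _ = S * (-(S * A) * A) := by rw [hAS]
    _ = -((S * S) * (A * A)) := by noncomm_ring
    _ = -(A * A) := by rw [hSS, one_mul]
  -- membership characterizations
  have hEQ : ∀ (x : ℝ) (v : V → ℝ),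
      v ∈ Module.End.eigenspace (Matrix.mulVecLin Q) x ↔ Q.mulVec v = x • v := by
    intro x v
    rw [Module.End.mem_eigenspace_iff]; rfl
  have hEA : ∀ (v : V → ℝ),
      v ∈ Module.End.eigenspace (Matrix.mulVecLin (A ^ 2)) μ ↔ (A ^ 2).mulVec v = μ • v := by
    intro v
    rw [Module.End.mem_eigenspace_iff]; rfl
  -- Q-eigenvectors are A²-eigenvectors
  have hsub : ∀ x y : ℝ, x + y = (d₁ : ℝ) + d₂ → x * y = (d₁ : ℝ) * d₂ - μ →
      ∀ v : V → ℝ, Q.mulVec v = x • v → (A ^ 2).mulVec v = μ • v := by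
    intro x y h1 h2 v hv
    have h4 := key4 y x (by linarith) (by rw [mul_comm]; exact h2)
    have hx : (Q - x • 1).mulVec v = 0 := by
      rw [Matrix.sub_mulVec, Matrix.smul_mulVec, Matrix.one_mulVec, hv, sub_self]
    have h5 : ((Q - y • 1) * (Q - x • 1)).mulVec v = 0 := by
      rw [← Matrix.mulVec_mulVec, hx, Matrix.mulVec_zero]
    rw [h4, Matrix.sub_mulVec, Matrix.smul_mulVec, Matrix.one_mulVec,
      sub_eq_zero] at h5
    exact h5
  -- (SA) maps Eig(Q,x) into Eig(Q,y)
  have hmap : ∀ x y : ℝ, x + y = (d₁ : ℝ) + d₂ →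
      ∀ v : V → ℝ, Q.mulVec v = x • v →
      Q.mulVec ((S * A).mulVec v) = y • ((S * A).mulVec v) := by
    intro x y hxy v hv
    have h5 := key5 x y hxy
    have hx : (Q - x • 1).mulVec v = 0 := by
      rw [Matrix.sub_mulVec, Matrix.smul_mulVec, Matrix.one_mulVec, hv, sub_self]
    have h6 : ((Q - y • 1) * (S * A)).mulVec v = 0 := by
      have : ((S * A) * (Q - x • 1)).mulVec v = 0 := by
        rw [← Matrix.mulVec_mulVec, hx, Matrix.mulVec_zero]
      rw [h5] at this
      rw [Matrix.neg_mulVec] at this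
      simpa using this
    rw [← Matrix.mulVec_mulVec, Matrix.sub_mulVec] at h6
    rw [Matrix.smul_mulVec, Matrix.one_mulVec, sub_eq_zero] at h6
    rw [Matrix.mulVec_mulVec] at h6 ⊢
    exact h6
  -- injectivity of (SA) on Q-eigenspaces
  have hker : ∀ x y : ℝ, x + y = (d₁ : ℝ) + d₂ → x * y = (d₁ : ℝ) * d₂ - μ →
      ∀ v : V → ℝ, Q.mulVec v = x • v → (S * A).mulVec v = 0 → v = 0 := by
    intro x y h1 h2 v hv h0
    have h3 : ((S * A) * (S * A)).mulVec v = 0 := by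
      rw [← Matrix.mulVec_mulVec, h0, Matrix.mulVec_zero]
    rw [hSASA, Matrix.neg_mulVec, neg_eq_zero, ← pow_two] at h3
    have h4 := hsub x y h1 h2 v hv
    rw [h3] at h4
    have : μ • v = 0 := h4.symm
    rcases smul_eq_zero.mp this with h | h
    · exact absurd h hμ
    · exact h
  -- the two eigenspaces
  set E₁ := Module.End.eigenspace (Matrix.mulVecLin Q) q₁ with hE₁
  set E₂ := Module.End.eigenspace (Matrix.mulVecLin Q) q₂ with hE₂
  have hsum' : q₂ + q₁ = (d₁ : ℝ) + d₂ := by linarith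
  have hprod' : q₂ * q₁ = (d₁ : ℝ) * d₂ - μ := by rw [mul_comm]; exact hprod
  -- generic dimension inequality
  have hle : ∀ x y : ℝ, x + y = (d₁ : ℝ) + d₂ → x * y = (d₁ : ℝ) * d₂ - μ →
      Module.finrank ℝ (Module.End.eigenspace (Matrix.mulVecLin Q) x) ≤
      Module.finrank ℝ (Module.End.eigenspace (Matrix.mulVecLin Q) y) := by
    intro x y h1 h2
    have hrestrict : ∀ v ∈ Module.End.eigenspace (Matrix.mulVecLin Q) x,
        Matrix.mulVecLin (S * A) v ∈ Module.End.eigenspace (Matrix.mulVecLin Q) y := by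
      intro v hv
      rw [hEQ] at hv ⊢
      exact hmap x y h1 v hv
    set φ := LinearMap.restrict (Matrix.mulVecLin (S * A)) hrestrict with hφ
    have hφinj : Function.Injective φ := by
      intro a b hab
      apply Subtype.ext
      have hvals : (S * A).mulVec a.1 = (S * A).mulVec b.1 := congrArg Subtype.val hab
      have hdiff : (S * A).mulVec (a.1 - b.1) = 0 := by
        rw [Matrix.mulVec_sub, hvals, sub_self]
      have hmem : Q.mulVec (a.1 - b.1) = x • (a.1 - b.1) := by
        have := (hEQ x _).mp (sub_mem a.2 b.2)
        exact this
      have := hker x y h1 h2 _ hmem hdiff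
      exact sub_eq_zero.mp this
    exact LinearMap.finrank_le_finrank_of_injective hφinj
  have hle₁ := hle q₁ q₂ hsum hprod
  have hle₂ := hle q₂ q₁ hsum' hprod'
  have hkeq : Module.finrank ℝ E₁ = Module.finrank ℝ E₂ := le_antisymm hle₁ hle₂
  -- E₁ ⊓ E₂ = ⊥
  have hinf : E₁ ⊓ E₂ = ⊥ := by
    rw [eq_bot_iff]
    intro v hv
    rw [Submodule.mem_inf] at hv
    obtain ⟨h1, h2⟩ := hv
    rw [hE₁, hEQ] at h1
    rw [hE₂, hEQ] at h2
    have h3 : (q₁ - q₂) • v = 0 := by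
      rw [sub_smul, ← h1, ← h2, sub_self]
    rw [Submodule.mem_bot]
    rcases smul_eq_zero.mp h3 with h | h
    · exact absurd h hqne
    · exact h
  -- E₁ ⊔ E₂ = Eig(A², μ)
  have hsup : E₁ ⊔ E₂ = Module.End.eigenspace (Matrix.mulVecLin (A ^ 2)) μ := by
    apply le_antisymm
    · apply sup_le
      · intro v hv
        rw [hE₁, hEQ] at hv
        rw [hEA]
        exact hsub q₁ q₂ hsum hprod v hv
      · intro v hv
        rw [hE₂, hEQ] at hv
        rw [hEA]
        exact hsub q₂ q₁ hsum' hprod' v hv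
    · intro v hv
      rw [hEA] at hv
      rw [Submodule.mem_sup]
      set c : ℝ := (q₁ - q₂)⁻¹ with hc
      refine ⟨c • ((Q - q₂ • 1).mulVec v), ?_, -(c • ((Q - q₁ • 1).mulVec v)), ?_, ?_⟩
      · rw [hE₁, hEQ, Matrix.mulVec_smul]
        have h5 : ((Q - q₁ • 1) * (Q - q₂ • 1)).mulVec v = 0 := by
          rw [key4 q₁ q₂ hsum hprod, Matrix.sub_mulVec, Matrix.smul_mulVec,
            Matrix.one_mulVec, hv, sub_self]
        rw [← Matrix.mulVec_mulVec, Matrix.sub_mulVec, Matrix.smul_mulVec,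
          Matrix.one_mulVec, sub_eq_zero] at h5
        rw [h5, smul_comm]
      · apply neg_mem
        rw [hE₂, hEQ, Matrix.mulVec_smul]
        have h5 : ((Q - q₂ • 1) * (Q - q₁ • 1)).mulVec v = 0 := by
          rw [key4 q₂ q₁ hsum' hprod', Matrix.sub_mulVec, Matrix.smul_mulVec,
            Matrix.one_mulVec, hv, sub_self]
        rw [← Matrix.mulVec_mulVec, Matrix.sub_mulVec, Matrix.smul_mulVec,
          Matrix.one_mulVec, sub_eq_zero] at h5
        rw [h5, smul_comm]
      · have e1 : (Q - q₂ • 1).mulVec v = Q.mulVec v - q₂ • v := by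
          rw [Matrix.sub_mulVec, Matrix.smul_mulVec, Matrix.one_mulVec]
        have e2 : (Q - q₁ • 1).mulVec v = Q.mulVec v - q₁ • v := by
          rw [Matrix.sub_mulVec, Matrix.smul_mulVec, Matrix.one_mulVec]
        rw [e1, e2]
        have e3 : c • (Q.mulVec v - q₂ • v) + -(c • (Q.mulVec v - q₁ • v))
            = c • ((q₁ - q₂) • v) := by
          module
        rw [e3, smul_smul, hc, inv_mul_cancel₀ hqne, one_smul]
  -- dimension count
  have hcount := Submodule.finrank_sup_add_finrank_inf_eq E₁ E₂
  rw [hsup, hinf, ← hm, finrank_bot] at hcount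
  refine ⟨⟨Module.finrank ℝ E₁, by omega⟩, by omega, by omega⟩
end

section
/- Let G be a connected graph, r a positive integer, and f a real polynomial. If Q^r = f(A), or L^r = f(A), or L^r = f(Q), then G is regular. -/
open Matrix Polynomial

lemma sq_mulVec_zero {V : Type*} [Fintype V] [DecidableEq V]
    (M : Matrix V V ℝ) (hM : M.IsSymm) (w : V → ℝ) (h : (M * M) *ᵥ w = 0) :
    M *ᵥ w = 0 := by
  have h1 : (M *ᵥ w) ⬝ᵥ (M *ᵥ w) = 0 := by
    rw [dotProduct_mulVec, ← mulVec_transpose, hM.eq, mulVec_mulVec, h, zero_dotProduct]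
  exact dotProduct_self_eq_zero.mp h1

lemma pow_mulVec_zero {V : Type*} [Fintype V] [DecidableEq V]
    (M : Matrix V V ℝ) (hM : M.IsSymm) (w : V → ℝ) :
    ∀ k, (M ^ (k + 1)) *ᵥ w = 0 → M *ᵥ w = 0 := by
  intro k
  induction k using Nat.strong_induction_on with
  | _ k ih =>
    intro h
    match k with
    | 0 => simpa using h
    | k + 1 =>
      have hsq : ((M ^ (k + 1)) * (M ^ (k + 1))) *ᵥ w = 0 := by
        have e : (M ^ (k + 1)) * (M ^ (k + 1)) = M ^ k * M ^ (k + 2) := by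
          rw [← pow_add, ← pow_add]; ring_nf
        rw [e, ← mulVec_mulVec, h, mulVec_zero]
      have hk1 : (M ^ (k + 1)) *ᵥ w = 0 :=
        sq_mulVec_zero _ (by rw [Matrix.IsSymm, transpose_pow, hM.eq]) w hsq
      exact ih k (Nat.lt_succ_self k) hk1

-- connected + degrees constant on edges → regular
lemma regular_of_adj_deg {V : Type*} [Fintype V] [DecidableEq V]
    (G : SimpleGraph V) [DecidableRel G.Adj] (hconn : G.Connected)
    (h : ∀ u v, G.Adj u v → G.degree u = G.degree v) :
    ∃ d : ℕ, G.IsRegularOfDegree d := by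
  have : Nonempty V := hconn.nonempty
  obtain ⟨v0⟩ := this
  refine ⟨G.degree v0, fun v => ?_⟩
  obtain ⟨p⟩ := hconn.preconnected v v0
  induction p with
  | nil => rfl
  | cons hadj p ih => exact (h _ _ hadj).trans ih

/-- If `G` is connected and `Q^r = f(A)`, `L^r = f(A)`, or `L^r = f(Q)` for some
polynomial `f` and positive integer `r`, then `G` is regular. -/
theorem regular_of_laplacian_pair_relation
    {V : Type*} [Fintype V] [DecidableEq V]
    (G : SimpleGraph V) [DecidableRel G.Adj] (hconn : G.Connected)
    (r : ℕ) (hr : 0 < r) (f : Polynomial ℝ)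
    (A D Q L : Matrix V V ℝ)
    (hA : A = G.adjMatrix ℝ)
    (hD : D = Matrix.diagonal fun v => (G.degree v : ℝ))
    (hQ : Q = D + A)
    (hL : L = D - A)
    (hrel : Q ^ r = Polynomial.aeval A f ∨
            L ^ r = Polynomial.aeval A f ∨
            L ^ r = Polynomial.aeval Q f) :
    ∃ d : ℕ, G.IsRegularOfDegree d := by
  obtain ⟨k, rfl⟩ : ∃ k, r = k + 1 := ⟨r - 1, (Nat.succ_pred_eq_of_pos hr).symm⟩
  have hLlap : L = G.lapMatrix ℝ := by
    rw [hL, hD, hA, SimpleGraph.lapMatrix, SimpleGraph.degMatrix]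
  -- step 1: in every case D commutes with the relevant power M
  have commA : Commute A (aeval A f) := by
    simpa using ((Commute.all (X : ℝ[X]) f).map (aeval A))
  have commQ : Commute Q (aeval Q f) := by
    simpa using ((Commute.all (X : ℝ[X]) f).map (aeval Q))
  obtain ⟨M, hDM, hcase⟩ :
      ∃ M : Matrix V V ℝ, Commute D M ∧ (M = Q ^ (k + 1) ∨ M = L ^ (k + 1)) := by
    rcases hrel with h1 | h2 | h3
    · refine ⟨Q ^ (k + 1), ?_, Or.inl rfl⟩
      have cA : Commute A (Q ^ (k + 1)) := h1 ▸ commA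
      have cQ : Commute Q (Q ^ (k + 1)) := (Commute.refl Q).pow_right _
      have : D = Q - A := by rw [hQ, add_sub_cancel_right]
      rw [this]; exact cQ.sub_left cA
    · refine ⟨L ^ (k + 1), ?_, Or.inr rfl⟩
      have cA : Commute A (L ^ (k + 1)) := h2 ▸ commA
      have cL : Commute L (L ^ (k + 1)) := (Commute.refl L).pow_right _
      have : D = L + A := by rw [hL, sub_add_cancel]
      rw [this]; exact cL.add_left cA
    · refine ⟨L ^ (k + 1), ?_, Or.inr rfl⟩
      have cQ : Commute Q (L ^ (k + 1)) := h3 ▸ commQ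
      have cL : Commute L (L ^ (k + 1)) := (Commute.refl L).pow_right _
      have : D = (2⁻¹ : ℝ) • (Q + L) := by rw [hQ, hL]; module
      rw [this]; exact (cQ.add_left cL).smul_left _
  -- step 2: M vanishes on entries with distinct degrees
  have key : ∀ u v, G.degree u ≠ G.degree v → M u v = 0 := by
    intro u v hne
    have h := congrFun (congrFun hDM.eq u) v
    rw [hD] at h
    rw [diagonal_mul, mul_diagonal] at h
    have hne' : (G.degree u : ℝ) ≠ (G.degree v : ℝ) := by
      exact_mod_cast fun hc => hne (Nat.cast_injective hc)
    have : ((G.degree u : ℝ) - G.degree v) * M u v = 0 := by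
      rw [sub_mul, h]; ring
    rcases mul_eq_zero.mp this with hc | hc
    · exact absurd (sub_eq_zero.mp hc) hne'
    · exact hc
  rcases hcase with rfl | rfl
  · -- signless case: positivity
    have hQnn : ∀ m u v, 0 ≤ (Q ^ m) u v := by
      intro m
      induction m with
      | zero => intro u v; by_cases h : u = v <;> simp [h, Matrix.one_apply]
      | succ m ih =>
        intro u v
        rw [pow_succ, Matrix.mul_apply]
        refine Finset.sum_nonneg fun w _ => mul_nonneg (ih u w) ?_
        rw [hQ, hD, hA]
        by_cases h : w = v <;> simp [Matrix.diagonal_apply, h]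
        · positivity
    have hQpos : ∀ m u v, G.Adj u v → 0 < (Q ^ (m + 1)) u v := by
      intro m
      induction m with
      | zero =>
        intro u v huv
        have hne := G.ne_of_adj huv
        rw [pow_one, hQ, hD, hA]
        simp [Matrix.diagonal_apply_ne _ hne, huv]
      | succ m ih =>
        intro u v huv
        rw [pow_succ', Matrix.mul_apply]
        refine Finset.sum_pos' (fun w _ => mul_nonneg ?_ (hQnn _ _ _))
          ⟨u, Finset.mem_univ u, ?_⟩
        · rw [hQ, hD, hA]
          by_cases h : u = w <;> simp [Matrix.diagonal_apply, h]
          · positivity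
        · refine mul_pos ?_ (ih u v huv)
          have hdeg : 0 < G.degree u := by
            rw [SimpleGraph.degree_pos_iff_exists_adj]; exact ⟨v, huv⟩
          rw [hQ, hD, hA]
          simp [Matrix.diagonal_apply]
          exact_mod_cast hdeg
    refine regular_of_adj_deg G hconn fun u v huv => ?_
    by_contra hne
    exact absurd (key u v hne) (ne_of_gt (hQpos k u v huv))
  · -- Laplacian cases
    obtain ⟨u0, -, hu0⟩ := Finset.exists_max_image Finset.univ
      (fun v => G.degree v) ⟨hconn.nonempty.some, Finset.mem_univ _⟩
    set w : V → ℝ := fun v => if G.degree v = G.degree u0 then 1 else 0 with hw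
    have hM1 : (L ^ (k + 1)) *ᵥ (fun _ => (1 : ℝ)) = 0 := by
      rw [pow_succ, ← mulVec_mulVec, hLlap, SimpleGraph.lapMatrix_mulVec_const_eq_zero,
        mulVec_zero]
    have hMw : (L ^ (k + 1)) *ᵥ w = 0 := by
      funext u
      simp only [Matrix.mulVec, dotProduct, Pi.zero_apply]
      by_cases hu : G.degree u = G.degree u0
      · have e1 : ∀ v, (L ^ (k + 1)) u v * w v = (L ^ (k + 1)) u v * 1 := by
          intro v
          by_cases hv : G.degree v = G.degree u0
          · simp [hw, hv]
          · rw [key u v (by rw [hu]; exact fun hc => hv hc.symm)]; ring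
        have e2 := congrFun hM1 u
        simp only [Matrix.mulVec, dotProduct, Pi.zero_apply] at e2
        rw [Finset.sum_congr rfl fun v _ => e1 v]
        simpa using e2
      · refine Finset.sum_eq_zero fun v _ => ?_
        by_cases hv : G.degree v = G.degree u0
        · rw [key u v (by rw [hv]; exact hu)]; ring
        · simp [hw, hv]
    have hLw : L *ᵥ w = 0 := pow_mulVec_zero L (by rw [hLlap]; exact G.isSymm_lapMatrix ℝ) w k hMw
    have hreach : ∀ i j : V, G.Reachable i j → w i = w j := by
      rw [← SimpleGraph.lapMatrix_mulVec_eq_zero_iff_forall_reachable, ← Matrix.toLin'_apply]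
      rw [Matrix.toLin'_apply, ← hLlap]
      exact hLw
    refine ⟨G.degree u0, fun v => ?_⟩
    have := hreach v u0 (hconn.preconnected v u0)
    by_contra hv
    simp [hw, hv] at this
end

section
/- Let G be a connected graph, r a positive integer, and f a real polynomial. If Q^r = f(L), then G is regular. -/
open Matrix Polynomial Finset

section Aux

variable {V : Type*} [Fintype V] [DecidableEq V]
  (G : SimpleGraph V) [DecidableRel G.Adj]

lemma signless_dotProduct (x : V → ℝ) :
    x ⬝ᵥ ((G.degMatrix ℝ + G.adjMatrix ℝ) *ᵥ x) =
      (∑ i : V, ∑ j : V, if G.Adj i j then (x i + x j)^2 else 0) / 2 := by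
  simp_rw [add_mulVec, dotProduct_add, SimpleGraph.dotProduct_mulVec_degMatrix,
    SimpleGraph.dotProduct_mulVec_adjMatrix, ← sum_add_distrib,
    SimpleGraph.degree_eq_sum_if_adj, sum_mul, ite_mul, one_mul, zero_mul,
    ← sum_add_distrib, ite_add_ite, add_zero]
  rw [← add_self_div_two (∑ x_1 : V, ∑ x_2 : V, _)]
  conv_lhs => enter [1,2,2,i,2,j]; rw [if_congr (SimpleGraph.adj_comm G i j) rfl rfl]
  conv_lhs => enter [1,2]; rw [Finset.sum_comm]
  simp_rw [← sum_add_distrib, ite_add_ite]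
  congr 2 with i
  congr 2 with j
  ring_nf

lemma signless_posSemidef : (G.degMatrix ℝ + G.adjMatrix ℝ).PosSemidef := by
  rw [posSemidef_iff_dotProduct_mulVec]
  constructor
  · rw [IsHermitian, conjTranspose_eq_transpose_of_trivial]
    exact ((G.isSymm_degMatrix (R := ℝ)).add G.isSymm_adjMatrix)
  · intro x
    rw [star_trivial, signless_dotProduct]
    positivity

lemma conj_pow_aux {n : Type*} [Fintype n] [DecidableEq n]
    (U M : Matrix n n ℝ) (hU : U * star U = 1) (h'U : star U * U = 1) (k : ℕ) :
    star U * M ^ k * U = (star U * M * U) ^ k := by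
  induction k with
  | zero => rw [pow_zero, pow_zero, mul_one, h'U]
  | succ k ih =>
      have cancel : ∀ X : Matrix n n ℝ, U * (star U * X) = X := fun X => by
        rw [← Matrix.mul_assoc, hU, one_mul]
      rw [pow_succ, pow_succ, ← ih]
      simp only [Matrix.mul_assoc, cancel]

end Aux

/-- If `G` is connected and `Q^r = f(L)` for some polynomial `f` and positive
integer `r`, then `G` is regular. -/
theorem regular_of_signless_pow_eq_poly_laplacian
    {V : Type*} [Fintype V] [DecidableEq V]
    (G : SimpleGraph V) [DecidableRel G.Adj] (hconn : G.Connected)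
    (r : ℕ) (hr : 0 < r) (f : Polynomial ℝ)
    (A D Q L : Matrix V V ℝ)
    (hA : A = G.adjMatrix ℝ)
    (hD : D = Matrix.diagonal fun v => (G.degree v : ℝ))
    (hQ : Q = D + A)
    (hL : L = D - A)
    (hrel : Q ^ r = Polynomial.aeval L f) :
    ∃ d : ℕ, G.IsRegularOfDegree d := by
  haveI : Nonempty V := hconn.nonempty
  have hD' : D = G.degMatrix ℝ := hD
  have hL' : L = G.lapMatrix ℝ := by rw [hL, hD', hA]; rfl
  have hQ' : Q = G.degMatrix ℝ + G.adjMatrix ℝ := by rw [hQ, hD', hA]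
  -- the all-ones vector
  set e : V → ℝ := fun _ => 1 with he
  have hLe : L *ᵥ e = 0 := by rw [hL']; exact G.lapMatrix_mulVec_const_eq_zero
  -- powers of L kill e (for positive exponents)
  have hLpow : ∀ n : ℕ, L ^ (n + 1) *ᵥ e = 0 := by
    intro n
    rw [pow_succ, ← mulVec_mulVec, hLe, mulVec_zero]
  -- aeval L p applied to e
  have haeval : ∀ p : ℝ[X], (aeval L p) *ᵥ e = p.eval 0 • e := by
    intro p
    induction p using Polynomial.induction_on' with
    | add p q hp hq => rw [map_add, add_mulVec, hp, hq, eval_add, add_smul]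
    | monomial n a =>
        rw [aeval_monomial, eval_monomial]
        cases n with
        | zero =>
            rw [pow_zero, mul_one, pow_zero, mul_one, Algebra.algebraMap_eq_smul_one,
              smul_mulVec, one_mulVec]
        | succ n =>
            rw [← mulVec_mulVec, hLpow, mulVec_zero, zero_pow (Nat.succ_ne_zero n),
              mul_zero, zero_smul]
  set c : ℝ := f.eval 0 with hc
  have hQre : Q ^ r *ᵥ e = c • e := by rw [hrel]; exact haeval f
  -- Q is positive semidefinite
  have hpsd : Q.PosSemidef := hQ' ▸ signless_posSemidef G
  have hH : Q.IsHermitian := hpsd.1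
  set U : Matrix V V ℝ := (hH.eigenvectorUnitary : Matrix V V ℝ) with hU
  set μ : V → ℝ := hH.eigenvalues with hμ
  have hUU : U * star U = 1 := (Matrix.mem_unitaryGroup_iff).mp hH.eigenvectorUnitary.2
  have hU'U : star U * U = 1 := (Matrix.mem_unitaryGroup_iff').mp hH.eigenvectorUnitary.2
  have hdiag : star U * Q * U = Matrix.diagonal μ := by
    have := hH.conjStarAlgAut_star_eigenvectorUnitary
    rw [Unitary.conjStarAlgAut_star_apply] at this
    rwa [RCLike.ofReal_real_eq_id, Function.id_comp] at this
  have hdiagpow : star U * Q ^ r * U = Matrix.diagonal (fun i => μ i ^ r) := by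
    rw [conj_pow_aux U Q hUU hU'U, hdiag, Matrix.diagonal_pow]
    rfl
  -- transfer to eigencoordinates
  set y : V → ℝ := star U *ᵥ e with hy
  have hUy : U *ᵥ y = e := by rw [hy, mulVec_mulVec, hUU, one_mulVec]
  have hdy : ∀ i, μ i ^ r * y i = c * y i := by
    have h1 : Matrix.diagonal (fun i => μ i ^ r) * star U = star U * Q ^ r := by
      rw [← hdiagpow, Matrix.mul_assoc, Matrix.mul_assoc, hUU, mul_one]
    have h2 : Matrix.diagonal (fun i => μ i ^ r) *ᵥ y = c • y := by
      rw [hy, mulVec_mulVec, h1, ← mulVec_mulVec, hQre, mulVec_smul]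
    intro i
    have := congr_fun h2 i
    rwa [mulVec_diagonal, Pi.smul_apply, smul_eq_mul] at this
  have hy0 : y ≠ 0 := by
    intro h
    have : e = 0 := by rw [← hUy, h, mulVec_zero]
    exact one_ne_zero (congr_fun this (Classical.arbitrary V))
  obtain ⟨i₀, hi₀⟩ := Function.ne_iff.mp hy0
  set s : ℝ := μ i₀ with hs
  have hcs : c = s ^ r := by
    have := hdy i₀
    exact (mul_right_cancel₀ hi₀ this).symm
  have hμnn : ∀ i, 0 ≤ μ i := fun i => hpsd.eigenvalues_nonneg i
  have hkey : ∀ i, μ i * y i = s * y i := by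
    intro i
    by_cases hyi : y i = 0
    · rw [hyi, mul_zero, mul_zero]
    · have h1 : μ i ^ r = s ^ r := by
        have := hdy i
        rw [hcs] at this
        exact mul_right_cancel₀ hyi this
      have h2 : μ i = s :=
        (pow_left_strictMonoOn₀ hr.ne').injOn (hμnn i) (hμnn i₀) h1
      rw [h2]
  have hdiagy : Matrix.diagonal μ *ᵥ y = s • y := by
    ext i
    rw [mulVec_diagonal, Pi.smul_apply, smul_eq_mul, hkey]
  have hQe : Q *ᵥ e = s • e := by
    have hQdecomp : Q = U * Matrix.diagonal μ * star U := by
      have := hH.spectral_theorem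
      rw [Unitary.conjStarAlgAut_apply] at this
      rwa [RCLike.ofReal_real_eq_id, Function.id_comp] at this
    rw [hQdecomp, ← mulVec_mulVec, ← mulVec_mulVec, ← hy, hdiagy, mulVec_smul, hUy]
  -- compute Q *ᵥ e pointwise
  have hdeg : ∀ v : V, 2 * (G.degree v : ℝ) = s := by
    intro v
    have h := congr_fun hQe v
    rw [hQ', add_mulVec] at h
    simp only [Pi.add_apply, Pi.smul_apply, smul_eq_mul] at h
    have h1 : (G.degMatrix ℝ *ᵥ e) v = (G.degree v : ℝ) * e v :=
      G.degMatrix_mulVec_apply v e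
    have h2 : (G.adjMatrix ℝ *ᵥ e) v = (G.degree v : ℝ) * 1 :=
      SimpleGraph.adjMatrix_mulVec_const_apply
    rw [h1, h2] at h
    simp only [he, mul_one] at h
    rw [← h]; ring
  have hdegeq : ∀ v w : V, G.degree v = G.degree w := by
    intro v w
    have : (G.degree v : ℝ) = (G.degree w : ℝ) := by
      have h1 := hdeg v
      have h2 := hdeg w
      have := h1.trans h2.symm
      linarith
    exact_mod_cast this
  exact ⟨G.degree (Classical.arbitrary V), fun v => hdegeq v _⟩
end

section
/- Let G be a connected graph, r a positive integer, and f a real polynomial, and suppose A^r = f(Q) or A^r = f(L). If r is odd or G is not bipartite, then G is regular. -/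
open Matrix Polynomial

/-- Closed walks of even length `2*t` at a vertex with a neighbor. -/
lemma exists_closed_walk_two_mul {V : Type*} {G : SimpleGraph V} {u w : V}
    (h : G.Adj u w) (t : ℕ) : ∃ p : G.Walk u u, p.length = 2 * t := by
  induction t with
  | zero => exact ⟨SimpleGraph.Walk.nil, rfl⟩
  | succ t ih =>
      obtain ⟨p, hp⟩ := ih
      exact ⟨SimpleGraph.Walk.cons h (SimpleGraph.Walk.cons h.symm p), by
        simp [hp]; ring⟩

/-- If a graph is not bipartite (in the explicit sense), it has a closed
walk of odd length. -/
lemma exists_odd_closed_walk {V : Type*} [Fintype V] (G : SimpleGraph V)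
    (hconn : G.Connected)
    (h : ¬ ∃ V₁ : Set V, ∀ u v : V, G.Adj u v → (u ∈ V₁ ↔ v ∉ V₁)) :
    ∃ (x : V) (c : G.Walk x x), Odd c.length := by
  by_contra hno
  push_neg at hno
  have hall : ∀ (x : V) (c : G.Walk x x), Even c.length := by
    intro x c
    have := hno x c
    exact Nat.not_odd_iff_even.mp this
  obtain ⟨u₀⟩ := hconn.nonempty
  apply h
  refine ⟨{x | Odd (G.dist u₀ x)}, ?_⟩
  intro u v huv
  obtain ⟨p, hp⟩ := hconn.exists_walk_length_eq_dist u₀ u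
  obtain ⟨q, hq⟩ := hconn.exists_walk_length_eq_dist u₀ v
  have hc : Even ((p.append (SimpleGraph.Walk.cons huv q.reverse)).length) :=
    hall _ _
  rw [SimpleGraph.Walk.length_append, SimpleGraph.Walk.length_cons,
    SimpleGraph.Walk.length_reverse, hp, hq] at hc
  simp only [Set.mem_setOf_eq]
  rcases Nat.even_or_odd (G.dist u₀ u) with he | ho
  · constructor
    · intro hodd; exact absurd hodd (Nat.not_odd_iff_even.mpr he)
    · intro hnodd
      exfalso
      have hv : Even (G.dist u₀ v) := Nat.not_odd_iff_even.mp hnodd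
      -- then total length is even + (1 + even) = odd, contradiction
      rcases he with ⟨a, ha⟩; rcases hv with ⟨b, hb⟩
      rcases hc with ⟨c, hcc⟩
      omega
  · constructor
    · intro _
      intro hv
      rcases ho with ⟨a, ha⟩; rcases hv with ⟨b, hb⟩
      rcases hc with ⟨c, hcc⟩
      omega
    · intro _; exact ho

/-- Suppose `G` is connected and `A^r = f(Q)` or `A^r = f(L)` for some
polynomial `f` and positive integer `r`.  If `r` is odd or `G` is not
bipartite, then `G` is regular. -/
theorem regular_of_adj_pow_relation_odd_or_nonbipartite
    {V : Type*} [Fintype V] [DecidableEq V]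
    (G : SimpleGraph V) [DecidableRel G.Adj] (hconn : G.Connected)
    (r : ℕ) (hr : 0 < r) (f : Polynomial ℝ)
    (A D Q L : Matrix V V ℝ)
    (hA : A = G.adjMatrix ℝ)
    (hD : D = Matrix.diagonal fun v => (G.degree v : ℝ))
    (hQ : Q = D + A)
    (hL : L = D - A)
    (hrel : A ^ r = Polynomial.aeval Q f ∨ A ^ r = Polynomial.aeval L f)
    (hcase : Odd r ∨
      ¬ ∃ V₁ : Set V, ∀ u v : V, G.Adj u v → (u ∈ V₁ ↔ v ∉ V₁)) :
    ∃ d : ℕ, G.IsRegularOfDegree d := by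
  -- Step 1: for every k, A^(r*k) commutes with D.
  have hcommD : ∀ k : ℕ, D * A ^ (r * k) = A ^ (r * k) * D := by
    intro k
    have key : ∀ M : Matrix V V ℝ, A ^ r = Polynomial.aeval M f →
        M * A ^ (r * k) = A ^ (r * k) * M := by
      intro M hM
      have h1 : A ^ (r * k) = Polynomial.aeval M (f ^ k) := by
        rw [pow_mul, hM, map_pow]
      have h2 : M * Polynomial.aeval M (f ^ k)
          = Polynomial.aeval M (f ^ k) * M := by
        calc M * Polynomial.aeval M (f ^ k)
            = Polynomial.aeval M (Polynomial.X * f ^ k) := by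
              rw [_root_.map_mul, Polynomial.aeval_X]
          _ = Polynomial.aeval M (f ^ k * Polynomial.X) := by rw [mul_comm]
          _ = Polynomial.aeval M (f ^ k) * M := by
              rw [_root_.map_mul, Polynomial.aeval_X]
      rw [h1]; exact h2
    have hAcomm : A * A ^ (r * k) = A ^ (r * k) * A :=
      (Commute.pow_right (Commute.refl A) (r * k)).eq ▸ rfl
    rcases hrel with hQf | hLf
    · have := key Q hQf
      rw [hQ, add_mul, mul_add] at this
      have hA' : A * A ^ (r * k) = A ^ (r * k) * A := by
        rw [← pow_succ', ← pow_succ]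
      linear_combination (norm := noncomm_ring) this - hA'
    · have := key L hLf
      rw [hL, sub_mul, mul_sub] at this
      have hA' : A * A ^ (r * k) = A ^ (r * k) * A := by
        rw [← pow_succ', ← pow_succ]
      linear_combination (norm := noncomm_ring) this + hA'
  -- Step 2: entrywise consequence.
  have hdeg : ∀ (k : ℕ) (u v : V), (A ^ (r * k)) u v ≠ 0 →
      (G.degree u : ℝ) = G.degree v := by
    intro k u v hne
    have := congrFun (congrFun (hcommD k) u) v
    rw [hD, Matrix.diagonal_mul, Matrix.mul_diagonal] at this
    rw [mul_comm ((A ^ (r * k)) u v)] at this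
    exact mul_right_cancel₀ hne this
  -- Step 3: nonzero entries from walks.
  have hwalk : ∀ (k : ℕ) (u v : V), (∃ p : G.Walk u v, p.length = r * k) →
      (G.degree u : ℝ) = G.degree v := by
    intro k u v ⟨p, hp⟩
    apply hdeg k u v
    rw [hA, SimpleGraph.adjMatrix_pow_apply_eq_card_walk]
    have : 0 < Fintype.card { q : G.Walk u v | q.length = r * k } := by
      apply Fintype.card_pos_iff.mpr
      exact ⟨⟨p, hp⟩⟩
    positivity
  -- Step 4: adjacent vertices have equal degree.
  have hadj : ∀ u v : V, G.Adj u v → (G.degree u : ℝ) = G.degree v := by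
    intro u v huv
    rcases hcase with hodd | hnb
    · -- r odd: walk of length r * 1 = r from u to v
      apply hwalk 1 u v
      obtain ⟨s, hs⟩ := hodd
      obtain ⟨c, hc⟩ := exists_closed_walk_two_mul huv s
      refine ⟨c.append (SimpleGraph.Walk.cons huv SimpleGraph.Walk.nil), ?_⟩
      rw [SimpleGraph.Walk.length_append, hc]
      simp only [SimpleGraph.Walk.length_cons, SimpleGraph.Walk.length_nil]
      omega
    · -- r even (or not, but in any case): use odd closed walk
      obtain ⟨x, c, hcodd⟩ := exists_odd_closed_walk G hconn hnb
      obtain ⟨q⟩ := hconn v x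
      -- odd closed walk at v
      set c' : G.Walk v v := q.append (c.append q.reverse) with hc'
      have hlen : c'.length = q.length + c.length + q.length := by
        simp [hc', SimpleGraph.Walk.length_append]; omega
      have hc'odd : Odd c'.length := by
        rw [hlen]
        rcases hcodd with ⟨a, ha⟩
        exact ⟨q.length + a, by omega⟩
      obtain ⟨a, ha⟩ := hc'odd
      obtain ⟨pad, hpadlen⟩ := exists_closed_walk_two_mul huv ((a + 1) * (r - 1))
      apply hwalk (1 + c'.length) u v
      refine ⟨pad.append (SimpleGraph.Walk.cons huv c'), ?_⟩
      rw [SimpleGraph.Walk.length_append, hpadlen, SimpleGraph.Walk.length_cons]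
      obtain ⟨s, rfl⟩ : ∃ s, r = s + 1 := ⟨r - 1, (Nat.succ_pred_eq_of_pos hr).symm⟩
      simp only [Nat.add_sub_cancel]
      rw [ha]; ring
  -- Step 5: propagate along walks.
  have hconst : ∀ u v : V, (G.degree u : ℝ) = G.degree v := by
    intro u v
    obtain ⟨p⟩ := hconn u v
    induction p with
    | nil => rfl
    | cons h p ih => exact (hadj _ _ h).trans ih
  obtain ⟨v₀⟩ := hconn.nonempty
  refine ⟨G.degree v₀, fun v => ?_⟩
  exact_mod_cast hconst v v₀
end

section
/- Let G be a connected bipartite graph with bipartition V₁ ∪ V₂. If either the all-ones vector 𝟏, or the vector 𝟏′ that equals 1 on V₁ and −1 on V₂, is an eigenvector of A², then G is biregular. -/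
open Matrix Finset

private lemma iff_aux1 {p q r : Prop} (h1 : p ↔ ¬q) (h2 : ¬(p ↔ r)) : q ↔ r := by tauto
private lemma iff_aux2 {p q r : Prop} (h1 : p ↔ ¬q) (h2 : p ↔ r) : ¬(q ↔ r) := by tauto

/-- Let `G` be a connected bipartite graph with bipartition `V₁ ∪ V₂`.  If
either the all-ones vector `𝟏` or the vector `𝟏′` (equal to `1` on `V₁` and
`−1` on `V₂`) is an eigenvector of `A²`, then `G` is biregular. -/
theorem biregular_of_ones_eigenvector_of_adj_sq
    {V : Type*} [Fintype V] [DecidableEq V]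
    (G : SimpleGraph V) [DecidableRel G.Adj] (hconn : G.Connected)
    (V₁ : Finset V)
    (hbip : ∀ u v : V, G.Adj u v → (u ∈ V₁ ↔ v ∉ V₁))
    (A : Matrix V V ℝ)
    (hA : A = G.adjMatrix ℝ)
    (heig :
      (∃ μ : ℝ, (A ^ 2).mulVec (fun _ => (1 : ℝ)) = μ • fun _ => (1 : ℝ)) ∨
      (∃ μ : ℝ, (A ^ 2).mulVec (fun v => if v ∈ V₁ then (1 : ℝ) else -1) =
        μ • fun v => if v ∈ V₁ then (1 : ℝ) else -1)) :
    ∃ (W : Set V) (d₁ d₂ : ℕ),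
      (∀ u v : V, G.Adj u v → (u ∈ W ↔ v ∉ W)) ∧
      (∀ v ∈ W, G.degree v = d₁) ∧ (∀ v ∉ W, G.degree v = d₂) := by
  classical
  subst hA
  have hWset : ∀ u v : V, G.Adj u v → (u ∈ (↑V₁ : Set V) ↔ v ∉ (↑V₁ : Set V)) := by
    intro u v huv
    simpa using hbip u v huv
  -- Step 0 : in both cases, the sum of degrees of neighbours is constant.
  obtain ⟨μ, hS⟩ : ∃ μ : ℝ, ∀ v : V,
      (∑ u ∈ G.neighborFinset v, (G.degree u : ℝ)) = μ := by
    rcases heig with ⟨μ, h⟩ | ⟨μ, h⟩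
    · refine ⟨μ, fun v => ?_⟩
      have h1 : G.adjMatrix ℝ *ᵥ (fun _ => (1 : ℝ)) = fun u => (G.degree u : ℝ) := by
        funext u
        simp [SimpleGraph.adjMatrix_mulVec_apply]
      have h2 := congrFun h v
      rw [pow_two, ← Matrix.mulVec_mulVec, h1] at h2
      simpa [SimpleGraph.adjMatrix_mulVec_apply] using h2
    · set ε : V → ℝ := fun v => if v ∈ V₁ then (1 : ℝ) else -1 with hε
      have hεne : ∀ v, ε v ≠ 0 := by
        intro v; by_cases hv : v ∈ V₁ <;> simp [hε, hv]
      have hadj : ∀ u w : V, G.Adj u w → ε w = -ε u := by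
        intro u w huw
        have := hbip u w huw
        by_cases hu : u ∈ V₁ <;> by_cases hw : w ∈ V₁ <;> simp [hε, hu, hw] at this ⊢ <;> tauto
      have h1 : G.adjMatrix ℝ *ᵥ ε = fun u => (G.degree u : ℝ) * (-ε u) := by
        funext u
        rw [SimpleGraph.adjMatrix_mulVec_apply]
        rw [Finset.sum_congr rfl (fun w hw => hadj u w ((G.mem_neighborFinset u w).mp hw))]
        simp [mul_comm]
      refine ⟨μ, fun v => ?_⟩
      have h2 := congrFun h v
      rw [pow_two, ← Matrix.mulVec_mulVec, h1] at h2
      rw [SimpleGraph.adjMatrix_mulVec_apply] at h2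
      have h3 : ∀ u ∈ G.neighborFinset v, (G.degree u : ℝ) * (-ε u) = (G.degree u : ℝ) * ε v := by
        intro u hu
        have := hadj v u ((G.mem_neighborFinset v u).mp hu)
        rw [this]; ring
      rw [Finset.sum_congr rfl h3, ← Finset.sum_mul] at h2
      have h4 : (∑ u ∈ G.neighborFinset v, (G.degree u : ℝ)) * ε v = μ * ε v := by
        simpa using h2
      exact mul_right_cancel₀ (hεne v) h4
  -- pick a vertex of minimum degree
  have : Nonempty V := hconn.nonempty
  obtain ⟨v₀, -, hmin⟩ :=
    Finset.exists_min_image (Finset.univ : Finset V) (fun v => G.degree v)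
      ⟨Classical.arbitrary V, Finset.mem_univ _⟩
  obtain ⟨t, htmin, htv₀⟩ : ∃ t : ℕ, (∀ v : V, t ≤ G.degree v) ∧ G.degree v₀ = t :=
    ⟨G.degree v₀, fun v => hmin v (Finset.mem_univ v), rfl⟩
  by_cases ht0 : t = 0
  -- degenerate case : the minimum degree is 0, so V = {v₀} and all degrees are 0
  · have hall : ∀ v : V, v = v₀ := by
      intro v
      obtain ⟨p⟩ := (hconn v₀ v)
      cases p with
      | nil => rfl
      | cons h q =>
        exfalso
        have hdeg : G.degree v₀ ≠ 0 := by
          rw [← SimpleGraph.card_neighborFinset_eq_degree]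
          exact Finset.card_ne_zero_of_mem ((G.mem_neighborFinset v₀ _).mpr h)
        exact hdeg (htv₀.trans ht0)
    refine ⟨↑V₁, 0, 0, hWset, ?_, ?_⟩ <;> intro v _ <;> rw [hall v] <;> omega
  have htpos : (0:ℝ) < (t : ℝ) := by
    have : 0 < t := Nat.pos_of_ne_zero ht0
    exact_mod_cast this
  have hminR : ∀ v : V, (t : ℝ) ≤ (G.degree v : ℝ) := by
    intro v; exact_mod_cast htmin v
  -- μ ≥ t * deg v for every v
  have hμt : ∀ v : V, (t : ℝ) * (G.degree v : ℝ) ≤ μ := by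
    intro v
    rw [← hS v]
    calc (t:ℝ) * G.degree v = ∑ _u ∈ G.neighborFinset v, (t:ℝ) := by
          simp [mul_comm]
      _ ≤ ∑ u ∈ G.neighborFinset v, (G.degree u : ℝ) :=
          Finset.sum_le_sum fun u _ => hminR u
  -- propagation lemmas
  have hpropA : ∀ v : V, (G.degree v : ℝ) = t → ∀ u : V, G.Adj v u →
      (t : ℝ) * (G.degree u : ℝ) = μ := by
    intro v hv u hu
    have hsum : ∑ u ∈ G.neighborFinset v, (μ - (t:ℝ) * G.degree u) = 0 := by
      rw [Finset.sum_sub_distrib, ← Finset.mul_sum, hS v, Finset.sum_const]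
      rw [SimpleGraph.card_neighborFinset_eq_degree, nsmul_eq_mul, hv]
      ring
    have := (Finset.sum_eq_zero_iff_of_nonneg
      (fun u _ => by linarith [hμt u])).mp hsum u ((G.mem_neighborFinset v u).mpr hu)
    linarith
  have hpropB : ∀ v : V, (t : ℝ) * (G.degree v : ℝ) = μ → ∀ u : V, G.Adj v u →
      (G.degree u : ℝ) = t := by
    intro v hv u hu
    have hsum : ∑ u ∈ G.neighborFinset v, ((G.degree u : ℝ) - t) = 0 := by
      rw [Finset.sum_sub_distrib, hS v, Finset.sum_const]
      rw [SimpleGraph.card_neighborFinset_eq_degree, nsmul_eq_mul]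
      linarith [hv]
    have := (Finset.sum_eq_zero_iff_of_nonneg
      (fun u _ => by linarith [hminR u])).mp hsum u ((G.mem_neighborFinset v u).mpr hu)
    linarith
  -- walk induction
  have key : ∀ (v w : V), G.Walk v w → (G.degree w : ℝ) = t →
      ((v ∈ V₁ ↔ w ∈ V₁) → (G.degree v : ℝ) = t) ∧
      (¬(v ∈ V₁ ↔ w ∈ V₁) → (t : ℝ) * (G.degree v : ℝ) = μ) := by
    intro v w p
    induction p with
    | nil => exact fun hw => ⟨fun _ => hw, fun h => absurd Iff.rfl h⟩
    | @cons a b c h q ih =>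
      intro hw
      have hside := hbip a b h
      obtain ⟨ih1, ih2⟩ := ih hw
      constructor
      · intro hs
        have hb : ¬(b ∈ V₁ ↔ c ∈ V₁) := iff_aux2 hside hs
        exact hpropB b (ih2 hb) a h.symm
      · intro hs
        have hb : (b ∈ V₁ ↔ c ∈ V₁) := iff_aux1 hside hs
        exact hpropA b (ih1 hb) a h.symm
  have htv₀R : (G.degree v₀ : ℝ) = t := by exact_mod_cast htv₀
  have keyAt : ∀ v : V, ((v ∈ V₁ ↔ v₀ ∈ V₁) → (G.degree v : ℝ) = t) ∧
      (¬(v ∈ V₁ ↔ v₀ ∈ V₁) → (t : ℝ) * (G.degree v : ℝ) = μ) := by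
    intro v
    obtain ⟨p⟩ := hconn v v₀
    exact key v v₀ p htv₀R
  -- any two vertices on the same side have equal degree
  have hsame : ∀ v w : V, (v ∈ V₁ ↔ w ∈ V₁) → G.degree v = G.degree w := by
    intro v w hvw
    by_cases hs : v ∈ V₁ ↔ v₀ ∈ V₁
    · have h1 := (keyAt v).1 hs
      have h2 := (keyAt w).1 (hvw.symm.trans hs)
      exact_mod_cast h1.trans h2.symm
    · have h1 := (keyAt v).2 hs
      have h2 := (keyAt w).2 (fun hh => hs (hvw.trans hh))
      have h3 : (G.degree v : ℝ) = G.degree w :=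
        mul_left_cancel₀ (ne_of_gt htpos) (h1.trans h2.symm)
      exact_mod_cast h3
  set d₁ : ℕ := if h : ∃ v : V, v ∈ V₁ then G.degree h.choose else 0 with hd₁
  set d₂ : ℕ := if h : ∃ v : V, v ∉ V₁ then G.degree h.choose else 0 with hd₂
  refine ⟨↑V₁, d₁, d₂, hWset, ?_, ?_⟩
  · intro v hv
    have hv' : v ∈ V₁ := by simpa using hv
    have hex : ∃ v : V, v ∈ V₁ := ⟨v, hv'⟩
    rw [hd₁, dif_pos hex]
    exact hsame v hex.choose (by simp [hv', hex.choose_spec])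
  · intro v hv
    have hv' : v ∉ V₁ := by simpa using hv
    have hex : ∃ v : V, v ∉ V₁ := ⟨v, hv'⟩
    rw [hd₂, dif_pos hex]
    exact hsame v hex.choose (by simp [hv', hex.choose_spec])
end

section
/- Let G be a connected graph, r a positive integer, and f a real polynomial. If A^r = f(Q) or A^r = f(L), then G is regular or biregular. -/
open Matrix Polynomial

private lemma aux_pad {V : Type*} {G : SimpleGraph V} (hnbr : ∀ v : V, ∃ w, G.Adj v w) :
    ∀ (k : ℕ) {u v : V} (p : G.Walk u v), ∃ q : G.Walk u v, q.length = p.length + 2 * k := by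
  intro k
  induction k with
  | zero => intro u v p; exact ⟨p, by simp⟩
  | succ k ih =>
    intro u v p
    obtain ⟨q, hq⟩ := ih p
    obtain ⟨w, hw⟩ := hnbr u
    exact ⟨SimpleGraph.Walk.cons hw (SimpleGraph.Walk.cons hw.symm q), by
      simp [SimpleGraph.Walk.length_cons, hq]; ring⟩

private lemma aux_even {V : Type*} [Fintype V] [DecidableEq V] {G : SimpleGraph V}
    [DecidableRel G.Adj]
    (hnbr : ∀ v : V, ∃ w, G.Adj v w) {r : ℕ} (hr2 : 2 ≤ r) (hre : Even r)
    (hkey : ∀ (u v : V) (p : G.Walk u v), p.length = r → G.degree u = G.degree v) :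
    ∀ {u v : V} (p : G.Walk u v), Even p.length → G.degree u = G.degree v := by
  suffices h : ∀ (n : ℕ) (u v : V) (p : G.Walk u v), p.length = n → Even n →
      G.degree u = G.degree v by
    intro u v p hp; exact h p.length u v p rfl hp
  intro n
  induction n using Nat.strong_induction_on with
  | _ n ih =>
    intro u v p hl he
    cases p with
    | nil => rfl
    | @cons _ a _ h q =>
      cases q with
      | nil =>
        exfalso
        simp only [SimpleGraph.Walk.length_cons, SimpleGraph.Walk.length_nil] at hl
        obtain ⟨m, hm⟩ := he; omega
      | @cons _ b _ h2 q2 =>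
        have hub : G.degree u = G.degree b := by
          obtain ⟨q', hq'⟩ := aux_pad hnbr ((r - 2) / 2)
            (SimpleGraph.Walk.cons h (SimpleGraph.Walk.cons h2 SimpleGraph.Walk.nil))
          refine hkey _ _ q' ?_
          simp only [SimpleGraph.Walk.length_cons, SimpleGraph.Walk.length_nil] at hq'
          obtain ⟨m, hm⟩ := hre; omega
        have hn2 : q2.length = n - 2 := by
          simp only [SimpleGraph.Walk.length_cons] at hl; omega
        have hlt : n - 2 < n := by
          simp only [SimpleGraph.Walk.length_cons] at hl; omega
        have hev : Even (n - 2) := by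
          obtain ⟨m, hm⟩ := he
          simp only [SimpleGraph.Walk.length_cons] at hl
          exact ⟨m - 1, by omega⟩
        exact hub.trans (ih (n - 2) hlt b v q2 hn2 hev)

private lemma aux_conn {V : Type*} [Fintype V] [DecidableEq V] {G : SimpleGraph V}
    [DecidableRel G.Adj]
    (hedge : ∀ u v : V, G.Adj u v → G.degree u = G.degree v) :
    ∀ {u v : V} (_ : G.Walk u v), G.degree u = G.degree v := by
  intro u v p
  induction p with
  | nil => rfl
  | cons h q ih => exact (hedge _ _ h).trans ih

/-- If `G` is connected and `A^r = f(Q)` or `A^r = f(L)` for some polynomial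
`f` and positive integer `r`, then `G` is regular or biregular. -/
theorem regular_or_biregular_of_adj_pow_relation
    {V : Type*} [Fintype V] [DecidableEq V]
    (G : SimpleGraph V) [DecidableRel G.Adj] (hconn : G.Connected)
    (r : ℕ) (hr : 0 < r) (f : Polynomial ℝ)
    (A D Q L : Matrix V V ℝ)
    (hA : A = G.adjMatrix ℝ)
    (hD : D = Matrix.diagonal fun v => (G.degree v : ℝ))
    (hQ : Q = D + A)
    (hL : L = D - A)
    (hrel : A ^ r = Polynomial.aeval Q f ∨ A ^ r = Polynomial.aeval L f) :
    (∃ d : ℕ, G.IsRegularOfDegree d) ∨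
    (∃ (W : Set V) (d₁ d₂ : ℕ),
      (∀ u v : V, G.Adj u v → (u ∈ W ↔ v ∉ W)) ∧
      (∀ v ∈ W, G.degree v = d₁) ∧ (∀ v ∉ W, G.degree v = d₂)) := by
  have hAc : A * A ^ r = A ^ r * A := ((Commute.refl A).pow_right r).eq
  have hcomm : D * A ^ r = A ^ r * D := by
    rcases hrel with h | h
    · have hQc : Q * A ^ r = A ^ r * Q := by
        rw [h]
        calc Q * aeval Q f = aeval Q (X * f) := by rw [_root_.map_mul, aeval_X]
          _ = aeval Q (f * X) := by rw [mul_comm]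
          _ = aeval Q f * Q := by rw [_root_.map_mul, aeval_X]
      have hDQ : D = Q - A := by rw [hQ, add_sub_cancel_right]
      rw [hDQ, sub_mul, mul_sub, hQc, hAc]
    · have hLc : L * A ^ r = A ^ r * L := by
        rw [h]
        calc L * aeval L f = aeval L (X * f) := by rw [_root_.map_mul, aeval_X]
          _ = aeval L (f * X) := by rw [mul_comm]
          _ = aeval L f * L := by rw [_root_.map_mul, aeval_X]
      have hDL : D = L + A := by rw [hL, sub_add_cancel]
      rw [hDL, add_mul, mul_add, hLc, hAc]
  have hkey : ∀ (u v : V) (p : G.Walk u v), p.length = r → G.degree u = G.degree v := by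
    intro u v p hp
    have hx : (A ^ r) u v ≠ 0 := by
      rw [hA, SimpleGraph.adjMatrix_pow_apply_eq_card_walk]
      have hpos : 0 < Fintype.card {p : G.Walk u v | p.length = r} :=
        Fintype.card_pos_iff.mpr ⟨⟨p, hp⟩⟩
      exact_mod_cast hpos.ne'
    have he := congrFun (congrFun hcomm u) v
    rw [hD] at he
    rw [show ((Matrix.diagonal fun v => (G.degree v : ℝ)) * A ^ r) u v
        = (G.degree u : ℝ) * (A ^ r) u v from Matrix.diagonal_mul _ _ _ _,
      show ((A ^ r) * Matrix.diagonal fun v => (G.degree v : ℝ)) u v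
        = (A ^ r) u v * (G.degree v : ℝ) from Matrix.mul_diagonal _ _ _ _] at he
    have : (G.degree u : ℝ) = (G.degree v : ℝ) := by
      rw [mul_comm ((A ^ r) u v) _] at he
      exact mul_right_cancel₀ hx he
    exact_mod_cast this
  by_cases hnbr : ∀ v : V, ∃ w, G.Adj v w
  · obtain ⟨v₀⟩ := hconn.nonempty
    rcases Nat.even_or_odd r with hre | hro
    · -- r even
      have hr2 : 2 ≤ r := by obtain ⟨m, hm⟩ := hre; omega
      have heven : ∀ {u v : V} (p : G.Walk u v), Even p.length → G.degree u = G.degree v :=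
        fun p hp => aux_even hnbr hr2 hre hkey p hp
      set W : Set V := {v | ∃ p : G.Walk v₀ v, Even p.length} with hW
      have hodd_of_not : ∀ v : V, v ∉ W → ∀ p : G.Walk v₀ v, ¬ Even p.length := by
        intro v hv p hp
        exact hv ⟨p, hp⟩
      by_cases hbp : ∀ u v : V, G.Adj u v → (u ∈ W ↔ v ∉ W)
      · right
        by_cases hex : ∃ v : V, v ∉ W
        · obtain ⟨v₁, hv₁⟩ := hex
          refine ⟨W, G.degree v₀, G.degree v₁, hbp, ?_, ?_⟩
          · intro v hv
            obtain ⟨p, hp⟩ := hv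
            exact (heven p hp).symm
          · intro v hv
            obtain ⟨p⟩ := hconn.preconnected v₀ v
            obtain ⟨q⟩ := hconn.preconnected v₀ v₁
            have hp : ¬ Even p.length := hodd_of_not v hv p
            have hq : ¬ Even q.length := hodd_of_not v₁ hv₁ q
            have : Even (p.reverse.append q).length := by
              rw [SimpleGraph.Walk.length_append, SimpleGraph.Walk.length_reverse]
              rw [Nat.not_even_iff_odd] at hp hq
              exact hp.add_odd hq
            exact heven (p.reverse.append q) this
        · push_neg at hex
          refine ⟨W, G.degree v₀, 0, hbp, ?_, ?_⟩
          · intro v hv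
            obtain ⟨p, hp⟩ := hv
            exact (heven p hp).symm
          · intro v hv
            exact absurd (hex v) hv
      · push_neg at hbp
        obtain ⟨u, v, huv, hiff⟩ := hbp
        have hc : ∃ c : G.Walk v₀ v₀, Odd c.length := by
          by_cases hu : u ∈ W
          · have hvW : v ∈ W := by tauto
            obtain ⟨p, hp⟩ := hu
            obtain ⟨q, hq⟩ := hvW
            refine ⟨p.append (SimpleGraph.Walk.cons huv q.reverse), ?_⟩
            rw [SimpleGraph.Walk.length_append, SimpleGraph.Walk.length_cons,
              SimpleGraph.Walk.length_reverse]
            obtain ⟨m, hm⟩ := hp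
            obtain ⟨k, hk⟩ := hq
            exact ⟨m + k, by omega⟩
          · have hvW : v ∉ W := by tauto
            obtain ⟨p⟩ := hconn.preconnected v₀ u
            obtain ⟨q⟩ := hconn.preconnected v₀ v
            have hp : ¬ Even p.length := hodd_of_not u hu p
            have hq : ¬ Even q.length := hodd_of_not v hvW q
            refine ⟨p.append (SimpleGraph.Walk.cons huv q.reverse), ?_⟩
            rw [SimpleGraph.Walk.length_append, SimpleGraph.Walk.length_cons,
              SimpleGraph.Walk.length_reverse]
            rw [Nat.not_even_iff_odd] at hp hq
            obtain ⟨m, hm⟩ := hp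
            obtain ⟨k, hk⟩ := hq
            exact ⟨m + k + 1, by omega⟩
        obtain ⟨c, hc⟩ := hc
        left
        refine ⟨G.degree v₀, fun x => ?_⟩
        obtain ⟨q⟩ := hconn.preconnected v₀ x
        by_cases hq : Even q.length
        · exact (heven q hq).symm
        · have : Even (c.append q).length := by
            rw [SimpleGraph.Walk.length_append]
            rw [Nat.not_even_iff_odd] at hq
            exact hc.add_odd hq
          exact (heven (c.append q) this).symm
    · -- r odd
      left
      have hedge : ∀ u v : V, G.Adj u v → G.degree u = G.degree v := by
        intro u v h
        obtain ⟨q, hq⟩ := aux_pad hnbr ((r - 1) / 2)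
          (SimpleGraph.Walk.cons h SimpleGraph.Walk.nil)
        refine hkey _ _ q ?_
        simp only [SimpleGraph.Walk.length_cons, SimpleGraph.Walk.length_nil] at hq
        obtain ⟨m, hm⟩ := hro; omega
      refine ⟨G.degree v₀, fun x => ?_⟩
      obtain ⟨p⟩ := hconn.preconnected v₀ x
      exact (aux_conn hedge p).symm
  · push_neg at hnbr
    obtain ⟨v, hv⟩ := hnbr
    left
    refine ⟨0, fun u => ?_⟩
    obtain ⟨p⟩ := hconn.preconnected v u
    cases p with
    | nil =>
      by_contra hne
      have : 0 < G.degree v := Nat.pos_of_ne_zero hne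
      obtain ⟨w, hw⟩ := (G.degree_pos_iff_exists_adj v).mp this
      exact hv w hw
    | cons h q => exact absurd h (hv _)
end

section
/- Let G be a connected graph and let w be the vector whose coordinate at each vertex u is √(d_u), where d_u is the degree of u. If w is an eigenvector of A, then G is regular or biregular. -/
open Matrix Finset

private lemma reach_closed {V : Type*} {G : SimpleGraph V} (P : V → Prop)
    (hP : ∀ a b, P a → G.Adj a b → P b) {u v : V} (h : G.Reachable u v) (hu : P u) : P v := by
  obtain ⟨p⟩ := h
  induction p with
  | nil => exact hu
  | cons h p ih => exact ih (hP _ _ hu h)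

/-- Let `G` be a connected graph and let `w` be the vector whose coordinate at
each vertex `u` is `√(d_u)`.  If `w` is an eigenvector of `A`, then `G` is
regular or biregular. -/
theorem regular_or_biregular_of_sqrt_degree_eigenvector_adj
    {V : Type*} [Fintype V] [DecidableEq V]
    (G : SimpleGraph V) [DecidableRel G.Adj] (hconn : G.Connected)
    (A : Matrix V V ℝ)
    (hA : A = G.adjMatrix ℝ)
    (w : V → ℝ) (hw : w = fun u => Real.sqrt (G.degree u))
    (heig : ∃ μ : ℝ, A.mulVec w = μ • w) :
    (∃ d : ℕ, G.IsRegularOfDegree d) ∨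
    (∃ (W : Set V) (d₁ d₂ : ℕ),
      (∀ u v : V, G.Adj u v → (u ∈ W ↔ v ∉ W)) ∧
      (∀ v ∈ W, G.degree v = d₁) ∧ (∀ v ∉ W, G.degree v = d₂)) := by
  subst hA hw
  obtain ⟨μ, hμ⟩ := heig
  have key : ∀ u : V, ∑ v ∈ G.neighborFinset u, Real.sqrt (G.degree v)
      = μ * Real.sqrt (G.degree u) := by
    intro u
    have := congrFun hμ u
    rw [SimpleGraph.adjMatrix_mulVec_apply] at this
    simpa using this
  by_cases hreg : ∀ u v : V, G.degree u = G.degree v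
  · left
    obtain ⟨u⟩ := hconn.nonempty
    exact ⟨G.degree u, fun v => hreg v u⟩
  · right
    push_neg at hreg
    obtain ⟨u₀, v₀, hne⟩ := hreg
    obtain ⟨umax, -, hmax⟩ := Finset.exists_max_image Finset.univ (fun u => G.degree u)
      ⟨u₀, Finset.mem_univ _⟩
    obtain ⟨umin, -, hmin⟩ := Finset.exists_min_image Finset.univ (fun u => G.degree u)
      ⟨u₀, Finset.mem_univ _⟩
    set D := G.degree umax with hD
    set m := G.degree umin with hm
    have hmax' : ∀ u, G.degree u ≤ D := fun u => hmax u (Finset.mem_univ u)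
    have hmin' : ∀ u, m ≤ G.degree u := fun u => hmin u (Finset.mem_univ u)
    have hmD : m ≠ D := by
      intro h
      apply hne
      have h1 := le_antisymm (hmax' u₀) (h ▸ hmin' u₀)
      have h2 := le_antisymm (hmax' v₀) (h ▸ hmin' v₀)
      rw [h1, h2]
    have hmltD : m < D := lt_of_le_of_ne (le_trans (hmin' umax) (le_refl _)) hmD
    have hDpos : 0 < D := lt_of_le_of_lt (Nat.zero_le m) hmltD
    have hmpos : 0 < m := by
      rcases Nat.eq_zero_or_pos m with h | h
      · exfalso
        have hdeg0 : G.degree umin = 0 := by omega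
        have hiso : ∀ x, ¬ G.Adj umin x := by
          intro x hx
          have hxmem : x ∈ G.neighborFinset umin := (SimpleGraph.mem_neighborFinset _ _ _).mpr hx
          have : 0 < G.degree umin := Finset.card_pos.2 ⟨x, hxmem⟩
          omega
        have hneuv : umin ≠ umax := by
          intro he; rw [he] at hdeg0; omega
        obtain ⟨p⟩ := hconn.preconnected umin umax
        cases p with
        | nil => exact hneuv rfl
        | cons hadj q => exact hiso _ hadj
      · exact h
    -- real versions
    set a := Real.sqrt (m : ℝ) with ha
    set b := Real.sqrt (D : ℝ) with hb
    have hapos : 0 < a := Real.sqrt_pos.2 (by exact_mod_cast hmpos)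
    have hbpos : 0 < b := Real.sqrt_pos.2 (by exact_mod_cast hDpos)
    have haa : a * a = (m : ℝ) := Real.mul_self_sqrt (by positivity)
    have hbb : b * b = (D : ℝ) := Real.mul_self_sqrt (by positivity)
    have hle : ∀ v : V, Real.sqrt (G.degree v) ≤ b :=
      fun v => Real.sqrt_le_sqrt (by exact_mod_cast hmax' v)
    have hge : ∀ v : V, a ≤ Real.sqrt (G.degree v) :=
      fun v => Real.sqrt_le_sqrt (by exact_mod_cast hmin' v)
    have hcard : ∀ u : V, (G.neighborFinset u).card = G.degree u := fun u => rfl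
    have hsum_le : ∀ u : V, μ * Real.sqrt (G.degree u) ≤ (G.degree u : ℝ) * b := by
      intro u
      rw [← key u]
      calc ∑ v ∈ G.neighborFinset u, Real.sqrt (G.degree v)
          ≤ ∑ v ∈ G.neighborFinset u, b := Finset.sum_le_sum fun v _ => hle v
        _ = (G.degree u : ℝ) * b := by rw [Finset.sum_const, hcard, nsmul_eq_mul]
    have hsum_ge : ∀ u : V, (G.degree u : ℝ) * a ≤ μ * Real.sqrt (G.degree u) := by
      intro u
      rw [← key u]
      calc (G.degree u : ℝ) * a = ∑ v ∈ G.neighborFinset u, a := by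
            rw [Finset.sum_const, hcard, nsmul_eq_mul]
        _ ≤ _ := Finset.sum_le_sum fun v _ => hge v
    have hμub : μ ≤ a * b := by
      have h1 := hsum_le umin
      rw [← hm] at h1
      have : Real.sqrt (m : ℝ) = a := rfl
      rw [this] at h1
      nlinarith [h1, hapos, haa]
    have hμlb : a * b ≤ μ := by
      have h1 := hsum_ge umax
      rw [← hD] at h1
      have : Real.sqrt (D : ℝ) = b := rfl
      rw [this] at h1
      nlinarith [h1, hbpos, hbb]
    have hμab : μ = a * b := le_antisymm hμub hμlb
    -- neighbors of a D-vertex all have degree m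
    have hnbrD : ∀ u, G.degree u = D → ∀ v, G.Adj u v → G.degree v = m := by
      intro u hu v huv
      have hsum : ∑ v ∈ G.neighborFinset u, Real.sqrt (G.degree v) = (D : ℝ) * a := by
        rw [key u, hu, hμab]
        show a * b * b = (D : ℝ) * a
        rw [mul_assoc, hbb, mul_comm]
      have hzero : ∑ v ∈ G.neighborFinset u, (Real.sqrt (G.degree v) - a) = 0 := by
        rw [Finset.sum_sub_distrib, hsum, Finset.sum_const, hcard, hu, nsmul_eq_mul, sub_self]
      have := (Finset.sum_eq_zero_iff_of_nonneg
        (fun v _ => sub_nonneg.2 (hge v))).1 hzero v ((SimpleGraph.mem_neighborFinset _ _ _).mpr huv)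
      have hsq : Real.sqrt (G.degree v) = Real.sqrt (m : ℝ) := by
        rw [← ha]; linarith [this]
      have : (G.degree v : ℝ) = (m : ℝ) :=
        (Real.sqrt_inj (by positivity) (by positivity)).1 hsq
      exact_mod_cast this
    -- neighbors of an m-vertex all have degree D
    have hnbrm : ∀ u, G.degree u = m → ∀ v, G.Adj u v → G.degree v = D := by
      intro u hu v huv
      have hsum : ∑ v ∈ G.neighborFinset u, Real.sqrt (G.degree v) = (m : ℝ) * b := by
        rw [key u, hu, hμab]
        show a * b * a = (m : ℝ) * b
        rw [mul_comm a b, mul_assoc, haa, mul_comm]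
      have hzero : ∑ v ∈ G.neighborFinset u, (b - Real.sqrt (G.degree v)) = 0 := by
        rw [Finset.sum_sub_distrib, hsum, Finset.sum_const, hcard, hu, nsmul_eq_mul, sub_self]
      have := (Finset.sum_eq_zero_iff_of_nonneg
        (fun v _ => sub_nonneg.2 (hle v))).1 hzero v ((SimpleGraph.mem_neighborFinset _ _ _).mpr huv)
      have hsq : Real.sqrt (G.degree v) = Real.sqrt (D : ℝ) := by
        rw [← hb]; linarith [this]
      have : (G.degree v : ℝ) = (D : ℝ) :=
        (Real.sqrt_inj (by positivity) (by positivity)).1 hsq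
      exact_mod_cast this
    -- every vertex has degree D or m
    have hall : ∀ v : V, G.degree v = D ∨ G.degree v = m := by
      intro v
      refine reach_closed (G := G) (fun x => G.degree x = D ∨ G.degree x = m)
        ?_ (hconn.preconnected umax v) (Or.inl rfl)
      rintro x y (hx | hx) hxy
      · exact Or.inr (hnbrD x hx y hxy)
      · exact Or.inl (hnbrm x hx y hxy)
    refine ⟨{u | G.degree u = D}, D, m, ?_, fun v hv => hv, ?_⟩
    · intro u v huv
      constructor
      · intro hu hv
        have hu' : G.degree u = D := hu
        have hv' : G.degree v = D := hv
        have := hnbrD u hu' v huv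
        exact hmD (this ▸ hv')
      · intro hv
        have hvm : G.degree v = m := (hall v).resolve_left hv
        exact hnbrm v hvm u huv.symm
    · intro v hv
      exact (hall v).resolve_left hv
end

section
/- Let G be a connected graph with no isolated vertices, r a positive integer, and f a real polynomial. If 𝓛^r = f(A), then G is regular or biregular. -/
open Matrix Polynomial

section Helpers

variable {n : Type*} [Fintype n] [DecidableEq n]

private lemma myConjPow (u B : Matrix n n ℝ) (hu : u * star u = 1) (hu' : star u * u = 1)
    (k : ℕ) : (u * B * star u) ^ k = u * B ^ k * star u := by
  induction k with
  | zero => simp [hu]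
  | succ k ih =>
      rw [pow_succ, ih, pow_succ]
      simp only [← mul_assoc]
      rw [mul_assoc (u * B ^ k) (star u) u, hu', mul_one]

private lemma aeval_conj_diagonal (u : Matrix n n ℝ) (hu : u * star u = 1)
    (hu' : star u * u = 1) (d : n → ℝ) (p : ℝ[X]) :
    aeval (u * diagonal d * star u) p = u * diagonal (fun i => p.eval (d i)) * star u := by
  induction p using Polynomial.induction_on' with
  | add p q hp hq =>
      rw [map_add, hp, hq, ← add_mul, ← mul_add]
      congr 2
      rw [diagonal_add]
      simp
  | monomial k a =>
      rw [aeval_monomial, myConjPow u _ hu hu', diagonal_pow]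
      have : (algebraMap ℝ (Matrix n n ℝ)) a * (u * diagonal (d ^ k) * star u)
          = u * ((algebraMap ℝ (Matrix n n ℝ)) a * diagonal (d ^ k)) * star u := by
        rw [Algebra.algebraMap_eq_smul_one, smul_one_mul, smul_one_mul, Matrix.mul_smul,
          Matrix.smul_mul]
      rw [this]
      congr 2
      rw [Algebra.algebraMap_eq_smul_one, smul_one_mul]
      funext i j
      by_cases h : i = j <;>
        simp [Matrix.diagonal_apply, h, eval_monomial, Pi.pow_apply, Matrix.smul_apply]

private lemma commute_aeval_self (A : Matrix n n ℝ) (q : ℝ[X]) : Commute A (aeval A q) := by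
  show A * aeval A q = aeval A q * A
  calc A * aeval A q = aeval A (X * q) := by rw [_root_.map_mul, aeval_X]
    _ = aeval A (q * X) := by rw [mul_comm]
    _ = aeval A q * A := by rw [_root_.map_mul, aeval_X]

private lemma commute_of_pow_eq_aeval (A NL : Matrix n n ℝ) (hNL : NL.PosSemidef)
    (r : ℕ) (hr : 0 < r) (f : ℝ[X]) (hrel : NL ^ r = aeval A f) :
    Commute A NL := by
  have hH : NL.IsHermitian := hNL.1
  set u : Matrix n n ℝ := (hH.eigenvectorUnitary : Matrix n n ℝ) with hu_def
  have hu : u * star u = 1 := Matrix.mem_unitaryGroup_iff.mp hH.eigenvectorUnitary.2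
  have hu' : star u * u = 1 := Matrix.mem_unitaryGroup_iff'.mp hH.eigenvectorUnitary.2
  set d : n → ℝ := hH.eigenvalues with hd_def
  have hspec : NL = u * diagonal d * star u := by
    have := hH.spectral_theorem
    rwa [RCLike.ofReal_real_eq_id, Function.id_comp] at this
  have hpow : NL ^ r = u * diagonal (fun i => d i ^ r) * star u := by
    rw [hspec, myConjPow u _ hu hu', diagonal_pow]
    rfl
  set s0 : Finset ℝ := Finset.image (fun i => d i ^ r) Finset.univ with hs0
  set p : ℝ[X] := Lagrange.interpolate s0 id (fun x => x ^ ((r : ℝ)⁻¹)) with hp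
  have hinterp : ∀ i, p.eval (d i ^ r) = d i := by
    intro i
    have hmem : d i ^ r ∈ s0 := Finset.mem_image_of_mem _ (Finset.mem_univ i)
    have := Lagrange.eval_interpolate_at_node (fun x => x ^ ((r : ℝ)⁻¹))
      (Set.injOn_id _) hmem
    rw [hp]
    simp only [id_eq] at this
    rw [this]
    exact Real.pow_rpow_inv_natCast (hNL.eigenvalues_nonneg i) hr.ne'
  have hNLpoly : aeval (NL ^ r) p = NL := by
    have hdd : (fun i => Polynomial.eval (d i ^ r) p) = d := funext hinterp
    rw [hpow, aeval_conj_diagonal u hu hu', hdd, hspec]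
  have : NL = aeval A (p.comp f) := by
    rw [aeval_comp, ← hrel, hNLpoly]
  rw [this]
  exact commute_aeval_self A _

end Helpers

section GraphHelpers

variable {V : Type*} [Fintype V] [DecidableEq V]

private lemma degree_eq_of_even_walk (G : SimpleGraph V) [DecidableRel G.Adj]
    (Hc : ∀ u v w : V, G.Adj u w → G.Adj w v → G.degree u = G.degree v) :
    ∀ {u v : V} (p : G.Walk u v), Even p.length → G.degree u = G.degree v
  | _, _, .nil, _ => rfl
  | _, _, .cons _ .nil, he => by simp [Nat.even_add_one] at he
  | u, v, .cons h1 (.cons h2 q), he => by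
      have hq : Even q.length := by
        simpa [SimpleGraph.Walk.length_cons, Nat.even_add_one, not_not] using he
      exact (Hc _ _ _ h1 h2).trans (degree_eq_of_even_walk G Hc q hq)

end GraphHelpers

/-- If `G` is connected with no isolated vertices and `𝓛^r = f(A)` for some
polynomial `f` and positive integer `r`, where `𝓛 = D^{-1/2} L D^{-1/2}` is the
normalized Laplacian, then `G` is regular or biregular. -/
theorem regular_or_biregular_of_normalized_laplacian_pow_eq_poly_adj
    {V : Type*} [Fintype V] [DecidableEq V]
    (G : SimpleGraph V) [DecidableRel G.Adj] (hconn : G.Connected)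
    (hdeg : ∀ v : V, 0 < G.degree v)
    (r : ℕ) (hr : 0 < r) (f : Polynomial ℝ)
    (A D L NL : Matrix V V ℝ)
    (hA : A = G.adjMatrix ℝ)
    (hD : D = Matrix.diagonal fun v => (G.degree v : ℝ))
    (hL : L = D - A)
    (hNL : NL = Matrix.diagonal (fun v => (Real.sqrt (G.degree v))⁻¹) * L *
      Matrix.diagonal (fun v => (Real.sqrt (G.degree v))⁻¹))
    (hrel : NL ^ r = Polynomial.aeval A f) :
    (∃ d : ℕ, G.IsRegularOfDegree d) ∨
    (∃ (W : Set V) (d₁ d₂ : ℕ),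
      (∀ u v : V, G.Adj u v → (u ∈ W ↔ v ∉ W)) ∧
      (∀ v ∈ W, G.degree v = d₁) ∧ (∀ v ∉ W, G.degree v = d₂)) := by
  -- Notation
  set s : V → ℝ := fun v => (Real.sqrt (G.degree v))⁻¹ with hs_def
  have hdpos : ∀ v : V, (0 : ℝ) < (G.degree v : ℝ) := fun v => by
    exact_mod_cast hdeg v
  have hspos : ∀ v : V, 0 < s v := fun v =>
    inv_pos.mpr (Real.sqrt_pos.mpr (hdpos v))
  set Sd : Matrix V V ℝ := Matrix.diagonal s with hSd_def
  -- `NL` is positive semidefinite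
  have hLlap : D - A = G.lapMatrix ℝ := by
    rw [hD, hA, SimpleGraph.lapMatrix, SimpleGraph.degMatrix]
  have hPSD : NL.PosSemidef := by
    have h1 : Sdᴴ = Sd := by
      rw [hSd_def, Matrix.diagonal_conjTranspose]
      simp
    have := (SimpleGraph.posSemidef_lapMatrix (R := ℝ) (G := G)).conjTranspose_mul_mul_same Sd
    rw [h1] at this
    rwa [hNL, hL, hLlap]
  -- `A` commutes with `NL`
  have hcomm : Commute A NL := commute_of_pow_eq_aeval A NL hPSD r hr f hrel
  -- `NL = 1 - Sd * A * Sd`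
  have hSDS : Sd * D * Sd = 1 := by
    rw [hSd_def, hD, Matrix.diagonal_mul_diagonal, Matrix.diagonal_mul_diagonal]
    have hfun : (fun v => s v * (G.degree v : ℝ) * s v) = fun _ => (1 : ℝ) := by
      funext v
      have h3 : s v * s v = ((G.degree v : ℝ))⁻¹ := by
        simp only [hs_def]
        rw [← mul_inv, Real.mul_self_sqrt (hdpos v).le]
      calc s v * (G.degree v : ℝ) * s v = (G.degree v : ℝ) * (s v * s v) := by ring
        _ = 1 := by rw [h3, mul_inv_cancel₀ (hdpos v).ne']
    rw [hfun, Matrix.diagonal_one]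
  have hNL1 : NL = 1 - Sd * A * Sd := by
    rw [hNL, hL, Matrix.mul_sub, Matrix.sub_mul, hSDS]
  -- entrywise consequence: vertices with a common neighbor have equal degree
  have hAB : A * (Sd * A * Sd) = (Sd * A * Sd) * A := by
    have h := hcomm.eq
    rw [hNL1, mul_one_sub, one_sub_mul] at h
    exact sub_right_injective h
  have Hc : ∀ u v w : V, G.Adj u w → G.Adj w v → G.degree u = G.degree v := by
    intro u v w h1 h2
    have hentry : (A * (Sd * A * Sd)) u v = ((Sd * A * Sd) * A) u v := by rw [hAB]
    have hSAS : ∀ x y : V, (Sd * A * Sd) x y = s x * A x y * s y := by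
      intro x y
      rw [hSd_def, Matrix.mul_diagonal, Matrix.diagonal_mul]
    have hAnn : ∀ x y : V, 0 ≤ A x y := by
      intro x y
      rw [hA, SimpleGraph.adjMatrix_apply]
      positivity
    set T : ℝ := ∑ x : V, A u x * s x * A x v with hT_def
    have hlhs : (A * (Sd * A * Sd)) u v = T * s v := by
      rw [Matrix.mul_apply, hT_def, Finset.sum_mul]
      congr 1
      funext x
      rw [hSAS x v]
      ring
    have hrhs : ((Sd * A * Sd) * A) u v = s u * T := by
      rw [Matrix.mul_apply, hT_def, Finset.mul_sum]
      congr 1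
      funext x
      rw [hSAS u x]
      ring
    have hTpos : 0 < T := by
      rw [hT_def]
      apply Finset.sum_pos'
      · intro x _
        have := hAnn u x
        have := hAnn x v
        have := (hspos x).le
        positivity
      · refine ⟨w, Finset.mem_univ w, ?_⟩
        have hA1 : A u w = 1 := by rw [hA]; simp [h1]
        have hA2 : A w v = 1 := by rw [hA]; simp [h2]
        rw [hA1, hA2, one_mul, mul_one]
        exact hspos w
    have hsuv : s u = s v := by
      have : s u * T = T * s v := by rw [← hlhs, ← hrhs, hentry]
      rw [mul_comm T (s v)] at this
      exact mul_right_cancel₀ hTpos.ne' this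
    have hsqrt : Real.sqrt (G.degree u) = Real.sqrt (G.degree v) := by
      have := hsuv
      rw [hs_def] at this
      exact inv_injective this
    have : (G.degree u : ℝ) = (G.degree v : ℝ) :=
      (Real.sqrt_inj (hdpos u).le (hdpos v).le).mp hsqrt
    exact_mod_cast this
  -- Graph-theoretic conclusion
  clear hrel hNL hL hD hA hcomm hAB hPSD hLlap hSDS hNL1
  have hnV : Nonempty V := hconn.nonempty
  obtain ⟨v₀⟩ := hnV
  by_cases hcase : ∃ v : V, (∃ p : G.Walk v₀ v, Odd p.length) ∧ (∃ p : G.Walk v₀ v, Even p.length)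
  · -- regular
    left
    obtain ⟨v₁, ⟨p₁, hp₁⟩, ⟨p₂, hp₂⟩⟩ := hcase
    refine ⟨G.degree v₀, fun v => ?_⟩
    have hreach : G.Reachable v₀ v := hconn v₀ v
    obtain ⟨q⟩ := hreach
    rcases Nat.even_or_odd q.length with hq | hq
    · exact (degree_eq_of_even_walk G Hc q hq).symm
    · have hv₁ : G.degree v₁ = G.degree v := by
        apply degree_eq_of_even_walk G Hc (p₁.reverse.append q)
        rw [SimpleGraph.Walk.length_append, SimpleGraph.Walk.length_reverse]
        exact Odd.add_odd hp₁ hq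
      have hv₀ : G.degree v₀ = G.degree v₁ := degree_eq_of_even_walk G Hc p₂ hp₂
      rw [← hv₁, ← hv₀]
  · -- biregular
    right
    push_neg at hcase
    obtain ⟨n₀, hn₀⟩ := (G.degree_pos_iff_exists_adj v₀).mp (hdeg v₀)
    refine ⟨{v | ∃ p : G.Walk v₀ v, Odd p.length}, G.degree n₀, G.degree v₀, ?_, ?_, ?_⟩
    · intro u v huv
      constructor
      · intro hu hv
        obtain ⟨q, hq⟩ := hv
        exact hcase u hu (q.concat huv.symm) (by
          rw [SimpleGraph.Walk.length_concat]; exact Odd.add_one hq)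
      · intro hv
        have hreach : G.Reachable v₀ u := hconn v₀ u
        obtain ⟨t⟩ := hreach
        rcases Nat.even_or_odd t.length with ht | ht
        · exact absurd ⟨t.concat huv, by
            rw [SimpleGraph.Walk.length_concat]; exact Even.add_one ht⟩ hv
        · exact ⟨t, ht⟩
    · intro v hv
      obtain ⟨p, hp⟩ := hv
      have : Even (SimpleGraph.Walk.cons hn₀.symm p).length := by
        rw [SimpleGraph.Walk.length_cons]
        exact Odd.add_one hp
      exact (degree_eq_of_even_walk G Hc _ this).symm
    · intro v hv
      have hreach : G.Reachable v₀ v := hconn v₀ v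
      obtain ⟨t⟩ := hreach
      rcases Nat.even_or_odd t.length with ht | ht
      · exact (degree_eq_of_even_walk G Hc t ht).symm
      · exact absurd ⟨t, ht⟩ hv
end

section
/- Let G be a simple graph on a finite nonempty vertex set with adjacency matrix A, and let J be the all-ones square matrix of the same size. There exists a real polynomial f such that f(A) = J if and only if G is connected and regular. -/
set_option linter.unusedSectionVars false


open Matrix Polynomial

section Aux

variable {V : Type*} [Fintype V] [DecidableEq V]

/-- `aeval` of a diagonal matrix is the diagonal of the evaluations. -/
lemma aeval_diagonal_eq (v : V → ℝ) (p : Polynomial ℝ) :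
    aeval (Matrix.diagonal v) p = Matrix.diagonal fun i => p.eval (v i) := by
  induction p using Polynomial.induction_on' with
  | add p q hp hq =>
      simp [hp, hq, Matrix.diagonal_add]
  | monomial n a =>
      simp only [aeval_monomial, eval_monomial]
      rw [Matrix.diagonal_pow]
      rw [Matrix.algebraMap_eq_diagonal]
      rw [Matrix.diagonal_mul_diagonal]
      rfl

/-- `aeval` commutes with conjugation by an invertible matrix. -/
lemma aeval_conj_eq (U W M : Matrix V V ℝ) (h1 : U * W = 1) (h2 : W * U = 1)
    (p : Polynomial ℝ) :
    aeval (U * M * W) p = U * (aeval M p) * W := by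
  have hpow : ∀ n : ℕ, (U * M * W) ^ n = U * M ^ n * W := by
    intro n
    induction n with
    | zero => simp [h1]
    | succ n ih =>
        rw [pow_succ, pow_succ, ih]
        calc U * M ^ n * W * (U * M * W) = U * M ^ n * (W * U) * M * W := by
              simp only [Matrix.mul_assoc]
          _ = U * (M ^ n * M) * W := by rw [h2]; simp only [Matrix.mul_assoc, Matrix.one_mul]
          _ = _ := by simp only [Matrix.mul_assoc]
  induction p using Polynomial.induction_on' with
  | add p q hp hq => simp [hp, hq, Matrix.mul_add, Matrix.add_mul]
  | monomial n a =>
      simp only [aeval_monomial, hpow]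
      rw [Algebra.commutes a (U * M ^ n * W), Algebra.commutes a (M ^ n)]
      simp only [Matrix.mul_assoc]
      rw [Algebra.commutes a W]

/-- An eigenvector of the adjacency matrix of a connected graph for the degree
eigenvalue is constant. -/
lemma eigenvector_const (G : SimpleGraph V) [DecidableRel G.Adj]
    (hG : G.Connected) {d : ℕ} (hd : G.IsRegularOfDegree d)
    (u : V → ℝ) (hu : G.adjMatrix ℝ *ᵥ u = (d : ℝ) • u) :
    ∀ i j : V, u i = u j := by
  have hne : (Finset.univ : Finset V).Nonempty := ⟨hG.nonempty.some, Finset.mem_univ _⟩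
  obtain ⟨i₀, -, hmax⟩ := Finset.exists_max_image Finset.univ u hne
  -- step along edges
  have step : ∀ a b : V, G.Adj a b → u a = u i₀ → u b = u i₀ := by
    intro a b hab ha
    by_contra hb
    have hblt : u b < u i₀ := lt_of_le_of_ne (hmax b (Finset.mem_univ b)) hb
    have hsum : ∑ j ∈ G.neighborFinset a, u j = (d : ℝ) * u a := by
      have := congrFun hu a
      rw [SimpleGraph.adjMatrix_mulVec_apply] at this
      simpa using this
    have hlt : ∑ j ∈ G.neighborFinset a, u j < ∑ _j ∈ G.neighborFinset a, u i₀ := by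
      refine Finset.sum_lt_sum (fun j _ => hmax j (Finset.mem_univ j)) ⟨b, ?_, hblt⟩
      rw [SimpleGraph.mem_neighborFinset]; exact hab
    rw [hsum, Finset.sum_const, SimpleGraph.neighborFinset_def] at hlt
    have : (d : ℝ) * u a = d * u i₀ := by rw [ha]
    rw [this] at hlt
    rw [← SimpleGraph.neighborFinset_def, SimpleGraph.card_neighborFinset_eq_degree, hd a] at hlt
    simp only [nsmul_eq_mul] at hlt
    exact lt_irrefl _ hlt
  have key : ∀ (x y : V) (_ : G.Walk x y), u x = u i₀ → u y = u i₀ := by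
    intro x y w
    induction w with
    | nil => exact id
    | cons h p ih => intro hx; exact ih (step _ _ h hx)
  have hall : ∀ i : V, u i = u i₀ := fun i =>
    key i₀ i (hG.preconnected i₀ i).some rfl
  intro i j; rw [hall i, hall j]

/-- An eigenvector of a regular graph for an eigenvalue other than the degree has
coordinate sum zero. -/
lemma eigenvector_sum_zero (G : SimpleGraph V) [DecidableRel G.Adj]
    {d : ℕ} (hd : G.IsRegularOfDegree d) (c : ℝ) (hc : c ≠ (d : ℝ))
    (u : V → ℝ) (hu : G.adjMatrix ℝ *ᵥ u = c • u) :
    ∑ i, u i = 0 := by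
  have h1 : Function.const V (1 : ℝ) ⬝ᵥ (G.adjMatrix ℝ *ᵥ u) = c * ∑ i, u i := by
    rw [hu, dotProduct_smul]
    simp [dotProduct, Function.const, mul_comm]
  have h2 : Function.const V (1 : ℝ) ⬝ᵥ (G.adjMatrix ℝ *ᵥ u) = (d : ℝ) * ∑ i, u i := by
    rw [Matrix.dotProduct_mulVec]
    have hvm : Function.const V (1 : ℝ) ᵥ* G.adjMatrix ℝ
        = G.adjMatrix ℝ *ᵥ Function.const V (1 : ℝ) := by
      rw [← Matrix.mulVec_transpose, SimpleGraph.transpose_adjMatrix]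
    rw [hvm]
    have : ∀ v, (G.adjMatrix ℝ *ᵥ Function.const V (1 : ℝ)) v = (d : ℝ) := by
      intro v
      rw [SimpleGraph.adjMatrix_mulVec_const_apply_of_regular hd, mul_one]
    simp only [dotProduct]
    rw [Finset.mul_sum]
    exact Finset.sum_congr rfl fun i _ => by rw [this i]
  have h3 : (c - (d : ℝ)) * ∑ i, u i = 0 := by
    rw [sub_mul, ← h1, ← h2, sub_self]
  rcases mul_eq_zero.mp h3 with h | h
  · exact absurd (sub_eq_zero.mp h) hc
  · exact h

end Aux

/-- For a graph `G` on a nonempty finite vertex set, there exists a polynomial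
`f` with `f(A) = J` (the all-ones matrix) if and only if `G` is connected and
regular. -/
theorem poly_adj_eq_allOnes_iff_connected_regular
    {V : Type*} [Fintype V] [DecidableEq V] [Nonempty V]
    (G : SimpleGraph V) [DecidableRel G.Adj] :
    (∃ f : Polynomial ℝ,
        Polynomial.aeval (G.adjMatrix ℝ) f = Matrix.of fun _ _ : V => (1 : ℝ)) ↔
      (G.Connected ∧ ∃ d : ℕ, G.IsRegularOfDegree d) := by
  set A := G.adjMatrix ℝ with hAdef
  set Jm : Matrix V V ℝ := Matrix.of fun _ _ : V => (1 : ℝ) with hJdef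
  constructor
  · rintro ⟨f, hf⟩
    have hcomm : A * Jm = Jm * A := by
      rw [← hf]
      calc A * aeval A f = aeval A X * aeval A f := by rw [aeval_X]
        _ = aeval A (X * f) := (_root_.map_mul _ _ _).symm
        _ = aeval A (f * X) := by rw [mul_comm]
        _ = aeval A f * A := by rw [_root_.map_mul, aeval_X]
    -- connectedness
    have hconn : G.Connected := by
      refine SimpleGraph.Connected.mk ?_
      intro i j
      by_contra hns
      have hpow : ∀ k : ℕ, (A ^ k) i j = 0 := by
        intro k
        rw [hAdef, SimpleGraph.adjMatrix_pow_apply_eq_card_walk]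
        have : IsEmpty (G.Walk i j) := by
          rw [← not_nonempty_iff]
          exact hns
        simp
      have hzero : (aeval A f) i j = 0 := by
        rw [aeval_eq_sum_range]
        rw [Matrix.sum_apply]
        refine Finset.sum_eq_zero fun k _ => ?_
        rw [Matrix.smul_apply, hpow k, smul_zero]
      rw [hf] at hzero
      simp only [hJdef, Matrix.of_apply] at hzero
      exact one_ne_zero hzero
    refine ⟨hconn, ?_⟩
    -- regularity
    obtain ⟨v₀⟩ := ‹Nonempty V›
    refine ⟨G.degree v₀, fun v => ?_⟩
    have hA1 : (A * Jm) v v₀ = (G.degree v : ℝ) := by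
      rw [hAdef, SimpleGraph.adjMatrix_mul_apply]
      simp [hJdef]
    have hA2 : (Jm * A) v v₀ = (G.degree v₀ : ℝ) := by
      rw [hAdef, SimpleGraph.mul_adjMatrix_apply]
      simp [hJdef]
    have : (G.degree v : ℝ) = (G.degree v₀ : ℝ) := by
      rw [← hA1, ← hA2, hcomm]
    exact_mod_cast this
  · rintro ⟨hG, d, hd⟩
    -- spectral setup
    have hA : A.IsHermitian := by
      rw [Matrix.IsHermitian, Matrix.conjTranspose_eq_transpose_of_trivial]
      exact G.isSymm_adjMatrix
    set μ : V → ℝ := hA.eigenvalues with hμdef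
    set U : Matrix V V ℝ := (Matrix.IsHermitian.eigenvectorUnitary hA : Matrix V V ℝ)
      with hUdef
    have hUU : star U * U = 1 := (Matrix.IsHermitian.eigenvectorUnitary hA).2.1
    have hUU' : U * star U = 1 := (Matrix.IsHermitian.eigenvectorUnitary hA).2.2
    set u : V → V → ℝ := fun j => ⇑(hA.eigenvectorBasis j) with hudef
    have heig : ∀ j, A *ᵥ u j = μ j • u j := fun j => hA.mulVec_eigenvectorBasis j
    have horth : ∀ k l, ∑ i, u k i * u l i = if k = l then (1 : ℝ) else 0 := by
      intro k l
      have h := congrFun (congrFun hUU k) l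
      rw [Matrix.mul_apply, Matrix.one_apply] at h
      rw [← h]
      refine Finset.sum_congr rfl fun i _ => ?_
      rw [Matrix.star_apply, star_trivial]
      rfl
    have hspec : A = U * Matrix.diagonal μ * star U := by
      have h := hA.spectral_theorem
      rw [RCLike.ofReal_real_eq_id] at h
      rw [hμdef, hUdef]
      simpa using h
    set n : ℕ := Fintype.card V with hndef
    set g : V → ℝ := fun k => if μ k = (d : ℝ) then (n : ℝ) else 0 with hgdef
    -- sums of eigenvector entries
    set S : V → ℝ := fun k => ∑ i, u k i with hSdef
    have hSzero : ∀ k, μ k ≠ (d : ℝ) → S k = 0 := fun k hk =>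
      eigenvector_sum_zero G hd (μ k) hk (u k) (heig k)
    -- conjugated all-ones matrix is diagonal
    have hJdiag : star U * Jm * U = Matrix.diagonal g := by
      ext k l
      have h1 : ∀ j, (star U * Jm) k j = S k := by
        intro j
        rw [Matrix.mul_apply]
        refine Finset.sum_congr rfl fun i _ => ?_
        simp only [Matrix.star_apply, star_trivial, hJdef, Matrix.of_apply, mul_one]
        rfl
      have hentry : (star U * Jm * U) k l = S k * S l := by
        calc (star U * Jm * U) k l = ∑ j, (star U * Jm) k j * U j l := Matrix.mul_apply
          _ = ∑ j, S k * u l j := Finset.sum_congr rfl fun j _ => by rw [h1 j]; rfl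
          _ = S k * ∑ j, u l j := (Finset.mul_sum _ _ _).symm
          _ = S k * S l := rfl
      rw [hentry]
      by_cases hk : μ k = (d : ℝ)
      · by_cases hl : μ l = (d : ℝ)
        · -- both eigenvectors are constant
          obtain ⟨i₁⟩ := ‹Nonempty V›
          have hck : ∀ i, u k i = u k i₁ :=
            fun i => eigenvector_const G hG hd (u k) (by rw [← hk]; exact heig k) i i₁
          have hcl : ∀ i, u l i = u l i₁ :=
            fun i => eigenvector_const G hG hd (u l) (by rw [← hl]; exact heig l) i i₁
          have hSk : S k = n * u k i₁ := by
            rw [hSdef]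
            simp only
            rw [Finset.sum_congr rfl fun i _ => hck i, Finset.sum_const, hndef]
            simp [nsmul_eq_mul]
          have hSl : S l = n * u l i₁ := by
            rw [hSdef]
            simp only
            rw [Finset.sum_congr rfl fun i _ => hcl i, Finset.sum_const, hndef]
            simp [nsmul_eq_mul]
          have horthkl : (n : ℝ) * (u k i₁ * u l i₁) = if k = l then (1:ℝ) else 0 := by
            rw [← horth k l]
            rw [Finset.sum_congr rfl fun i _ => by rw [hck i, hcl i]]
            rw [Finset.sum_const, hndef]
            simp [nsmul_eq_mul]
          have : S k * S l = (n : ℝ) * ((n : ℝ) * (u k i₁ * u l i₁)) := by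
            rw [hSk, hSl]; ring
          rw [this, horthkl]
          rw [Matrix.diagonal_apply]
          by_cases hkl : k = l
          · subst hkl; simp [hgdef, hk]
          · simp [hkl]
        · rw [hSzero l hl, mul_zero, Matrix.diagonal_apply]
          by_cases hkl : k = l
          · subst hkl; simp [hgdef, hl]
          · simp [hkl]
      · rw [hSzero k hk, zero_mul, Matrix.diagonal_apply]
        by_cases hkl : k = l
        · subst hkl; simp [hgdef, hk]
        · simp [hkl]
    have hJ : Jm = U * Matrix.diagonal g * star U := by
      rw [← hJdiag]
      calc Jm = (U * star U) * Jm * (U * star U) := by rw [hUU']; simp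
        _ = U * (star U * Jm * U) * star U := by simp only [Matrix.mul_assoc]
    -- the Hoffman polynomial
    set s : Finset V := Finset.univ.filter (fun k => μ k ≠ (d : ℝ)) with hsdef
    set f : Polynomial ℝ :=
      C (n : ℝ) * ∏ k ∈ s, (C (((d : ℝ) - μ k)⁻¹) * (X - C (μ k))) with hfdef
    have heval : ∀ k, f.eval (μ k) = g k := by
      intro k
      by_cases hk : μ k = (d : ℝ)
      · have : f.eval (μ k) = (n : ℝ) *
            ∏ j ∈ s, (((d : ℝ) - μ j)⁻¹ * ((d : ℝ) - μ j)) := by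
          rw [hfdef, eval_mul, eval_C, eval_prod, hk]
          congr 1
          refine Finset.prod_congr rfl fun j _ => ?_
          simp
        rw [this]
        have : ∏ j ∈ s, (((d : ℝ) - μ j)⁻¹ * ((d : ℝ) - μ j)) = 1 := by
          refine Finset.prod_eq_one fun j hj => ?_
          rw [hsdef, Finset.mem_filter] at hj
          have : (d : ℝ) - μ j ≠ 0 := sub_ne_zero.mpr (Ne.symm hj.2)
          exact inv_mul_cancel₀ this
        rw [this, mul_one, hgdef]
        simp [hk]
      · have hks : k ∈ s := by rw [hsdef, Finset.mem_filter]; exact ⟨Finset.mem_univ k, hk⟩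
        have : f.eval (μ k) = 0 := by
          rw [hfdef, eval_mul, eval_prod]
          rw [Finset.prod_eq_zero hks (by simp)]
          rw [mul_zero]
        rw [this, hgdef]
        simp [hk]
    refine ⟨f, ?_⟩
    calc aeval A f = aeval (U * Matrix.diagonal μ * star U) f := by rw [← hspec]
      _ = U * aeval (Matrix.diagonal μ) f * star U := aeval_conj_eq U (star U) _ hUU' hUU f
      _ = U * Matrix.diagonal (fun k => f.eval (μ k)) * star U := by rw [aeval_diagonal_eq]
      _ = U * Matrix.diagonal g * star U := by
            congr 1; congr 1; exact congrArg Matrix.diagonal (funext heval)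
      _ = Jm := hJ.symm
end
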